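/- arXiv:0812.3707 — 11 statements merged into one kernel-verified Lean document; each statement's English description precedes it below -/
import Mathlib

section
/- Let M be a symmetric real n×n matrix with zero diagonal and positive off-diagonal entries, and let P = I - (1/n)J where J is the all-ones matrix. If PMP is negative semidefinite, then there exist vectors x_1,...,x_n in ℝ^n such that M_{ij} = ‖x_i - x_j‖² for all i,j. -/
open Matrix

theorem stmt_0 (n : ℕ) (hn : 0 < n) (M : Matrix (Fin n) (Fin n) ℝ)
    (hsymm : M.IsSymm)
    (hdiag : ∀ i, M i i = 0)
    (hoff : ∀ i j, i ≠ j → 0 < M i j)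
    (P : Matrix (Fin n) (Fin n) ℝ)
    (hP : P = 1 - (n : ℝ)⁻¹ • (Matrix.of fun _ _ => (1 : ℝ)))
    (hnsd : (-(P * M * P)).PosSemidef) :
    ∃ x : Fin n → EuclideanSpace ℝ (Fin n),
      ∀ i j, M i j = dist (x i) (x j) ^ 2 := by
  -- entrywise formula for P * M
  have hPM : ∀ i j, (P * M) i j = M i j - (n : ℝ)⁻¹ * ∑ k, M k j := by
    intro i j
    subst hP
    simp [Matrix.mul_apply, Matrix.sub_apply, Matrix.one_apply, sub_mul,
      Finset.sum_sub_distrib, Finset.mul_sum]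
  have hPMP : ∀ i j, (P * M * P) i j =
      M i j - (n : ℝ)⁻¹ * ∑ k, M k j - (n : ℝ)⁻¹ * ∑ k, M i k
        + (n : ℝ)⁻¹ * ((n : ℝ)⁻¹ * ∑ k, ∑ l, M l k) := by
    intro i j
    have h1 : (P * M * P) i j = ∑ k, (P * M) i k * P k j := Matrix.mul_apply
    rw [h1]
    have h2 : ∀ k : Fin n, (P * M) i k * P k j =
        (M i k - (n : ℝ)⁻¹ * ∑ l, M l k) * P k j := by
      intro k; rw [hPM]
    simp only [h2]
    subst hP
    simp only [Matrix.sub_apply, Matrix.one_apply, Matrix.smul_apply, Matrix.of_apply,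
      smul_eq_mul, mul_one]
    rw [Finset.sum_congr rfl (fun k _ => mul_sub _ _ _), Finset.sum_sub_distrib]
    rw [Finset.sum_congr rfl (fun k _ => mul_comm (M i k - (n : ℝ)⁻¹ * ∑ l, M l k) _)]
    simp only [ite_mul, one_mul, zero_mul, Finset.sum_ite_eq', Finset.mem_univ, if_true]
    rw [Finset.sum_congr rfl (fun k _ => by ring_nf :
      ∀ k ∈ Finset.univ, (M i k - (n : ℝ)⁻¹ * ∑ l, M l k) * (n : ℝ)⁻¹
        = (n : ℝ)⁻¹ * M i k - (n : ℝ)⁻¹ * ((n : ℝ)⁻¹ * ∑ l, M l k))]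
    rw [Finset.sum_sub_distrib, ← Finset.mul_sum, ← Finset.mul_sum, ← Finset.mul_sum]
    ring
  -- column sums equal row sums
  have hrow : ∀ i, (∑ k, M k i) = ∑ k, M i k := by
    intro i
    exact Finset.sum_congr rfl fun k _ => hsymm.apply i k
  -- the key identity
  have key : ∀ i j, (-(P * M * P)) i i + (-(P * M * P)) j j - 2 * (-(P * M * P)) i j
      = 2 * M i j := by
    intro i j
    simp only [Matrix.neg_apply, hPMP, hrow, hdiag]
    ring
  obtain ⟨B, hB⟩ : ∃ B : Matrix (Fin n) (Fin n) ℝ, -(P * M * P) = Bᴴ * B := by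
    open scoped MatrixOrder Matrix.Norms.L2Operator in
    obtain ⟨B, hB⟩ := CStarAlgebra.nonneg_iff_eq_star_mul_self.mp hnsd.nonneg
    exact ⟨B, hB⟩
  have hG : ∀ i j, (-(P * M * P)) i j = ∑ k, B k i * B k j := by
    intro i j
    rw [hB]
    simp [Matrix.mul_apply, Matrix.conjTranspose_apply]
  refine ⟨fun i => (WithLp.equiv 2 (Fin n → ℝ)).symm
    (fun k => (Real.sqrt 2)⁻¹ * B k i), fun i j => ?_⟩
  rw [EuclideanSpace.dist_eq, Real.sq_sqrt (by positivity)]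
  simp only [WithLp.equiv_symm_apply, WithLp.ofLp_toLp, Real.dist_eq, sq_abs]
  have hsq : ((Real.sqrt 2)⁻¹) ^ 2 = 2⁻¹ := by
    rw [inv_pow, Real.sq_sqrt (by norm_num : (0:ℝ) ≤ 2)]
  have : ∀ k : Fin n, ((Real.sqrt 2)⁻¹ * B k i - (Real.sqrt 2)⁻¹ * B k j) ^ 2
      = 2⁻¹ * (B k i * B k i + B k j * B k j - 2 * (B k i * B k j)) := by
    intro k
    have : ((Real.sqrt 2)⁻¹ * B k i - (Real.sqrt 2)⁻¹ * B k j) ^ 2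
        = ((Real.sqrt 2)⁻¹) ^ 2 * (B k i * B k i + B k j * B k j - 2 * (B k i * B k j)) := by
      ring
    rw [this, hsq]
  rw [Finset.sum_congr rfl (fun k _ => this k), ← Finset.mul_sum]
  rw [Finset.sum_sub_distrib, Finset.sum_add_distrib, ← Finset.mul_sum]
  rw [← hG i i, ← hG j j, ← hG i j]
  have := key i j
  linarith
end

section
/- Let M be a symmetric real n×n matrix with zero diagonal, and suppose M is the squared-distance matrix of points x_1,...,x_n in ℝ^m (i.e., M_{ij} = ‖x_i - x_j‖²). Then PMP is negative semidefinite, where P = I - (1/n)J. -/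
open Matrix RealInnerProductSpace

theorem stmt_1 (n m : ℕ) (M : Matrix (Fin n) (Fin n) ℝ)
    (hsymm : M.IsSymm)
    (hdiag : ∀ i, M i i = 0)
    (x : Fin n → EuclideanSpace ℝ (Fin m))
    (hM : ∀ i j, M i j = dist (x i) (x j) ^ 2)
    (P : Matrix (Fin n) (Fin n) ℝ)
    (hP : P = 1 - (n : ℝ)⁻¹ • (Matrix.of fun _ _ => (1 : ℝ))) :
    (-(P * M * P)).PosSemidef := by
  have hPsymm : Pᵀ = P := by
    subst hP
    ext i j
    simp [transpose_apply, one_apply]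
    by_cases h : i = j <;> simp [h, one_apply, eq_comm]
  rw [posSemidef_iff_dotProduct_mulVec]
  constructor
  · -- Hermitian
    have hM' : Mᵀ = M := hsymm
    unfold Matrix.IsHermitian
    rw [conjTranspose_neg]
    congr 1
    rw [conjTranspose_eq_transpose_of_trivial, transpose_mul, transpose_mul, hPsymm, hM',
      Matrix.mul_assoc]
  · intro v
    -- key bilinear computation
    have key : ∀ w : Fin n → ℝ, (∑ i, w i) = 0 →
        ∑ i, ∑ j, w i * M i j * w j ≤ 0 := by
      intro w hw
      set y : EuclideanSpace ℝ (Fin m) := ∑ i, w i • x i with hy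
      have hinner : (inner ℝ y y : ℝ) = ∑ i, ∑ j, w i * w j * (inner ℝ (x i) (x j) : ℝ) := by
        rw [hy, sum_inner]
        refine Finset.sum_congr rfl fun i _ => ?_
        rw [real_inner_smul_left, inner_sum, Finset.mul_sum]
        refine Finset.sum_congr rfl fun j _ => ?_
        rw [real_inner_smul_right]; ring
      have hexp : ∑ i, ∑ j, w i * M i j * w j
          = -2 * (inner ℝ y y : ℝ) := by
        rw [hinner]
        have : ∀ i j, w i * M i j * w j
            = w i * w j * ‖x i‖ ^ 2 + w i * w j * ‖x j‖ ^ 2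
              - 2 * (w i * w j * (inner ℝ (x i) (x j) : ℝ)) := by
          intro i j
          rw [hM, dist_eq_norm, @norm_sub_sq_real]
          ring
        have e1 : ∑ i, ∑ j, w i * w j * ‖x i‖ ^ 2 = 0 := by
          have h1 : ∀ i, ∑ j, w i * w j * ‖x i‖ ^ 2 = (w i * ‖x i‖ ^ 2) * ∑ j, w j := by
            intro i; rw [Finset.mul_sum]
            exact Finset.sum_congr rfl fun j _ => by ring
          simp [h1, hw]
        have e2 : ∑ i, ∑ j, w i * w j * ‖x j‖ ^ 2 = 0 := by
          have h2 : ∀ i : Fin n, ∑ j, w i * w j * ‖x j‖ ^ 2 = w i * ∑ j, w j * ‖x j‖ ^ 2 := by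
            intro i; rw [Finset.mul_sum]
            exact Finset.sum_congr rfl fun j _ => by ring
          simp [h2, ← Finset.sum_mul, hw]
        have hsplit : ∑ i, ∑ j, w i * M i j * w j
            = (∑ i, ∑ j, w i * w j * ‖x i‖ ^ 2) + (∑ i, ∑ j, w i * w j * ‖x j‖ ^ 2)
              - 2 * (∑ i, ∑ j, w i * w j * (inner ℝ (x i) (x j) : ℝ)) := by
          simp only [Finset.mul_sum, ← Finset.sum_add_distrib, ← Finset.sum_sub_distrib]
          exact Finset.sum_congr rfl fun i _ => Finset.sum_congr rfl fun j _ => this i j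
        rw [hsplit, e1, e2]
        ring
      rw [hexp]
      have := real_inner_self_nonneg (x := y)
      nlinarith
    -- specialize to w = P *ᵥ v
    set w : Fin n → ℝ := P *ᵥ v with hw
    have hsum : ∑ i, w i = 0 := by
      rcases Nat.eq_zero_or_pos n with h0 | hpos
      · subst h0; simp
      · have : ∀ i, w i = v i - (n : ℝ)⁻¹ * ∑ j, v j := by
          intro i
          simp [hw, hP, mulVec, dotProduct, Matrix.sub_apply, one_apply, sub_mul,
            Finset.sum_sub_distrib, Finset.sum_ite_eq, Finset.sum_ite_eq', Finset.mul_sum]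
        simp only [this, Finset.sum_sub_distrib, Finset.sum_const, Finset.card_univ,
          Fintype.card_fin, nsmul_eq_mul]
        rw [← mul_assoc, mul_inv_cancel₀ (by positivity : (n : ℝ) ≠ 0)]
        ring
    have gen : ∀ u : Fin n → ℝ, u ⬝ᵥ (M *ᵥ u) = ∑ i, ∑ j, u i * M i j * u j := by
      intro u
      simp only [dotProduct, mulVec, Finset.mul_sum]
      exact Finset.sum_congr rfl fun i _ => Finset.sum_congr rfl fun j _ => by
        show u i * (M i j * u j) = _; ring
    have hquad : v ⬝ᵥ ((P * M * P) *ᵥ v) = ∑ i, ∑ j, w i * M i j * w j := by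
      rw [← Matrix.mulVec_mulVec, ← Matrix.mulVec_mulVec, ← hw, Matrix.dotProduct_mulVec,
        ← hPsymm, Matrix.vecMul_transpose, ← hw, gen w]
    have := key w hsum
    have hstar : star v = v := rfl
    rw [hstar, Matrix.neg_mulVec, dotProduct_neg, hquad]
    linarith
end

section
/- Let M be the squared-distance matrix of points x_1,...,x_n in ℝ^m, and let P = I - (1/n)J. Then the rank of PMP is at most m. Conversely, if M is symmetric with zero diagonal and PMP is negative semidefinite of rank r, then M is the squared-distance matrix of n points in ℝ^r. -/
open Matrix Finset

lemma Pcolsum (n : ℕ) (hn : 0 < n) (j : Fin n) :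
    ∑ k, ((1 - (n:ℝ)⁻¹ • (Matrix.of fun _ _ => (1:ℝ)) : Matrix (Fin n) (Fin n) ℝ)) k j = 0 := by
  have hn' : (n:ℝ) ≠ 0 := Nat.cast_ne_zero.mpr hn.ne'
  simp [Matrix.sub_apply, Matrix.one_apply, Finset.sum_sub_distrib, Finset.sum_ite_eq]
  field_simp
  simp

lemma Prowsum (n : ℕ) (hn : 0 < n) (i : Fin n) :
    ∑ k, ((1 - (n:ℝ)⁻¹ • (Matrix.of fun _ _ => (1:ℝ)) : Matrix (Fin n) (Fin n) ℝ)) i k = 0 := by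
  have hn' : (n:ℝ) ≠ 0 := Nat.cast_ne_zero.mpr hn.ne'
  simp [Matrix.sub_apply, Matrix.one_apply, Finset.sum_sub_distrib, Finset.sum_ite_eq]
  field_simp
  simp

lemma rank_smul_le' (c : ℝ) {k l : ℕ} (A : Matrix (Fin k) (Fin l) ℝ) : (c • A).rank ≤ A.rank := by
  have h : c • A = (c • (1 : Matrix (Fin k) (Fin k) ℝ)) * A := by
    rw [Matrix.smul_mul, Matrix.one_mul]
  rw [h]; exact Matrix.rank_mul_le_right _ _

lemma rank_smul_eq' {c : ℝ} (hc : c ≠ 0) {k l : ℕ} (A : Matrix (Fin k) (Fin l) ℝ) :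
    (c • A).rank = A.rank := by
  refine le_antisymm (rank_smul_le' c A) ?_
  have := rank_smul_le' c⁻¹ (c • A)
  rwa [smul_smul, inv_mul_cancel₀ hc, one_smul] at this

lemma psd_smul' {n : ℕ} {A : Matrix (Fin n) (Fin n) ℝ} (hA : A.PosSemidef) {c : ℝ} (hc : 0 ≤ c) :
    (c • A).PosSemidef := by
  refine .of_dotProduct_mulVec_nonneg ?_ fun x => ?_
  · show (c • A)ᴴ = c • A
    rw [Matrix.conjTranspose_smul, star_trivial, hA.1]
  · rw [Matrix.smul_mulVec, dotProduct_smul]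
    exact mul_nonneg hc (hA.dotProduct_mulVec_nonneg x)

lemma pmp_apply (n : ℕ) (M : Matrix (Fin n) (Fin n) ℝ) (i j : Fin n) :
    (((1 - (n:ℝ)⁻¹ • (Matrix.of fun _ _ => (1:ℝ)) : Matrix (Fin n) (Fin n) ℝ)) * M *
      ((1 - (n:ℝ)⁻¹ • (Matrix.of fun _ _ => (1:ℝ)) : Matrix (Fin n) (Fin n) ℝ))) i j
    = M i j - (n:ℝ)⁻¹ * (∑ k, M i k) - (n:ℝ)⁻¹ * (∑ k, M k j)
      + (n:ℝ)⁻¹ * (n:ℝ)⁻¹ * (∑ k, ∑ l, M k l) := by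
  simp only [Matrix.sub_mul, Matrix.mul_sub, Matrix.one_mul, Matrix.mul_one,
    Matrix.smul_mul, Matrix.mul_smul, smul_smul]
  simp only [Matrix.sub_apply, Matrix.smul_apply, smul_eq_mul, Matrix.mul_apply,
    Matrix.of_apply, one_mul, mul_one, Finset.mul_sum, Finset.sum_mul, mul_sub,
    Finset.sum_sub_distrib, ← mul_assoc]
  have hd : ∑ x : Fin n, ∑ i : Fin n, (↑n:ℝ)⁻¹ * (↑n)⁻¹ * M i x
      = ∑ x : Fin n, ∑ i : Fin n, (↑n:ℝ)⁻¹ * (↑n)⁻¹ * M x i := Finset.sum_comm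
  rw [hd]
  ring

theorem stmt_2 (n : ℕ) (hn : 0 < n)
    (P : Matrix (Fin n) (Fin n) ℝ)
    (hP : P = 1 - (n : ℝ)⁻¹ • (Matrix.of fun _ _ => (1 : ℝ))) :
    (∀ (m : ℕ) (x : Fin n → EuclideanSpace ℝ (Fin m)) (M : Matrix (Fin n) (Fin n) ℝ),
        (∀ i j, M i j = dist (x i) (x j) ^ 2) → (P * M * P).rank ≤ m)
    ∧
    (∀ (M : Matrix (Fin n) (Fin n) ℝ) (r : ℕ),
        M.IsSymm → (∀ i, M i i = 0) → (-(P * M * P)).PosSemidef →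
        (P * M * P).rank = r →
        ∃ x : Fin n → EuclideanSpace ℝ (Fin r),
          ∀ i j, M i j = dist (x i) (x j) ^ 2) := by
  constructor
  · -- forward direction
    intro m x M hM
    set G : Matrix (Fin n) (Fin n) ℝ := Matrix.of fun i j => (inner ℝ (x i) (x j) : ℝ) with hGdef
    set A : Matrix (Fin n) (Fin n) ℝ := Matrix.of fun i _ => ‖x i‖^2 with hAdef
    set B : Matrix (Fin n) (Fin n) ℝ := Matrix.of fun _ j => ‖x j‖^2 with hBdef
    have hMdec : M = A + B - (2:ℝ) • G := by
      ext i j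
      rw [hM i j, dist_eq_norm, norm_sub_sq_real]
      simp [hAdef, hBdef, hGdef]
      ring
    have hAP : A * P = 0 := by
      ext i j
      rw [hP]
      simp only [Matrix.mul_apply, hAdef, Matrix.of_apply, Matrix.zero_apply]
      rw [← Finset.mul_sum, Pcolsum n hn j, mul_zero]
    have hPB : P * B = 0 := by
      ext i j
      rw [hP]
      simp only [Matrix.mul_apply, hBdef, Matrix.of_apply, Matrix.zero_apply]
      rw [← Finset.sum_mul, Prowsum n hn i, zero_mul]
    have hkey : P * M * P = (-2 : ℝ) • (P * G * P) := by
      rw [hMdec]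
      rw [Matrix.mul_sub, Matrix.sub_mul, Matrix.mul_add, Matrix.add_mul,
        Matrix.mul_assoc P A P, hAP, Matrix.mul_zero, Matrix.mul_smul, Matrix.smul_mul,
        hPB, Matrix.zero_mul]
      simp [Matrix.mul_assoc]
    rw [hkey]
    set X : Matrix (Fin m) (Fin n) ℝ := Matrix.of fun k i => x i k with hXdef
    have hGX : G = Xᵀ * X := by
      ext i j
      simp [hGdef, hXdef, Matrix.mul_apply, PiLp.inner_apply, RCLike.inner_apply,
        Matrix.transpose_apply, mul_comm]
    calc ((-2 : ℝ) • (P * G * P)).rank ≤ (P * G * P).rank := rank_smul_le' _ _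
      _ ≤ (G * P).rank := by rw [Matrix.mul_assoc]; exact Matrix.rank_mul_le_right _ _
      _ ≤ G.rank := Matrix.rank_mul_le_left _ _
      _ ≤ (Xᵀ).rank := by rw [hGX]; exact Matrix.rank_mul_le_left _ _
      _ ≤ m := by simpa using Matrix.rank_le_card_width Xᵀ
  · -- reverse direction
    intro M r hsym hdiag hpsd hrank
    subst hrank
    subst hP
    set P : Matrix (Fin n) (Fin n) ℝ := 1 - (n:ℝ)⁻¹ • (Matrix.of fun _ _ => (1:ℝ)) with hPdef
    set G : Matrix (Fin n) (Fin n) ℝ := (-(2:ℝ)⁻¹) • (P * M * P) with hGdef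
    have hGpsd : G.PosSemidef := by
      have : G = (2:ℝ)⁻¹ • (-(P * M * P)) := by rw [hGdef]; module
      rw [this]
      exact psd_smul' hpsd (by norm_num)
    obtain ⟨B, hB⟩ : ∃ B : Matrix (Fin n) (Fin n) ℝ, G = Bᴴ * B := by
      open scoped MatrixOrder in exact CStarAlgebra.nonneg_iff_eq_star_mul_self.mp hGpsd.nonneg
    set v : Fin n → EuclideanSpace ℝ (Fin n) := fun i => WithLp.toLp 2 (fun k => B k i) with hvdef
    have hinner : ∀ i j, (inner ℝ (v i) (v j) : ℝ) = G i j := by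
      intro i j
      rw [hB]
      simp [hvdef, PiLp.inner_apply, RCLike.inner_apply, Matrix.mul_apply,
        Matrix.conjTranspose_apply]
      exact Finset.sum_congr rfl fun k _ => mul_comm _ _
    -- the algebraic identity M i j = G i i + G j j - 2 G i j
    have hMG : ∀ i j, M i j = G i i - 2 * G i j + G j j := by
      intro i j
      have hFii := pmp_apply n M i i
      have hFjj := pmp_apply n M j j
      have hFij := pmp_apply n M i j
      have hcol : ∀ a : Fin n, (∑ k, M k a) = ∑ k, M a k :=
        fun a => Finset.sum_congr rfl fun k _ => hsym.apply a k
      rw [hGdef]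
      simp only [Matrix.smul_apply, smul_eq_mul]
      rw [hFii, hFjj, hFij, hcol i, hcol j, hdiag i, hdiag j]
      ring
    -- the span of the v's
    set V := Submodule.span ℝ (Set.range v) with hVdef
    have hfin : Module.finrank ℝ V = (P * M * P).rank := by
      have h1 : B.rank = Module.finrank ℝ V := by
        rw [B.rank_eq_finrank_span_cols, ← LinearEquiv.finrank_map_eq (WithLp.linearEquiv 2 ℝ (Fin n → ℝ)).symm,
          Submodule.map_span, ← Set.range_comp]
        rfl
      have h2 : G.rank = B.rank := by rw [hB]; exact Matrix.rank_conjTranspose_mul_self B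
      have h3 : G.rank = (P * M * P).rank := by
        rw [hGdef]; exact rank_smul_eq' (by norm_num) _
      rw [← h1, ← h2, h3]
    rw [← hfin]
    have hmem : ∀ i, v i ∈ V := fun i => Submodule.subset_span (Set.mem_range_self i)
    refine ⟨fun i => (stdOrthonormalBasis ℝ V).repr ⟨v i, hmem i⟩, fun i j => ?_⟩
    rw [LinearIsometryEquiv.dist_map, Subtype.dist_eq]
    rw [dist_eq_norm, norm_sub_sq_real, ← real_inner_self_eq_norm_sq,
      ← real_inner_self_eq_norm_sq]
    rw [hinner i i, hinner i j, hinner j j, hMG i j]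
end

section
/- Let G be a simple graph on n vertices with adjacency matrix A, and suppose the smallest eigenvalue τ₁ of A satisfies τ₁ < -1. Let b = τ₁/(τ₁+1) and M = A + b(J - I - A). Then M has zero diagonal, positive off-diagonal entries, and PMP is negative semidefinite, where P = I - (1/n)J; hence M is a Euclidean distance matrix. -/
open Matrix Finset

private lemma aux_psd_smul {n : ℕ} {N : Matrix (Fin n) (Fin n) ℝ} (h : N.PosSemidef) {c : ℝ}
    (hc : 0 ≤ c) : (c • N).PosSemidef := by
  refine posSemidef_iff_dotProduct_mulVec.mpr ⟨?_, fun x => ?_⟩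
  · unfold Matrix.IsHermitian
    rw [conjTranspose_smul, h.1, star_trivial]
  · rw [smul_mulVec, dotProduct_smul, smul_eq_mul]
    exact mul_nonneg hc (h.dotProduct_mulVec_nonneg x)

private lemma aux_psd_shift {n : ℕ} (A : Matrix (Fin n) (Fin n) ℝ) (hAh : A.IsHermitian) (τ₁ : ℝ)
    (hτmin : ∀ μ : ℝ, (∃ w ≠ 0, A *ᵥ w = μ • w) → τ₁ ≤ μ) :
    (A - τ₁ • 1).PosSemidef := by
  have hBh : (A - τ₁ • 1).IsHermitian := by
    unfold Matrix.IsHermitian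
    rw [conjTranspose_sub, conjTranspose_smul, hAh.eq, star_trivial, conjTranspose_one]
  refine hBh.posSemidef_iff_eigenvalues_nonneg.mpr fun i => ?_
  set v : Fin n → ℝ := ⇑(hBh.eigenvectorBasis i) with hv
  have hv0 : v ≠ 0 := by
    intro h
    exact hBh.eigenvectorBasis.orthonormal.ne_zero i (by ext k; exact congrFun h k)
  have hmul := hBh.mulVec_eigenvectorBasis i
  have hAv : A *ᵥ v = (hBh.eigenvalues i + τ₁) • v := by
    have h1 : (A - τ₁ • 1) *ᵥ v = A *ᵥ v - τ₁ • v := by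
      rw [sub_mulVec, smul_mulVec, one_mulVec]
    rw [h1] at hmul
    rw [add_smul, ← hmul]
    abel
  have := hτmin _ ⟨v, hv0, hAv⟩
  rw [Pi.zero_apply]
  linarith

private lemma aux_pmp {n : ℕ} (J P M : Matrix (Fin n) (Fin n) ℝ)
    (hJ : J = Matrix.of fun _ _ => (1 : ℝ)) (hP : P = 1 - (n : ℝ)⁻¹ • J) (i j : Fin n) :
    (P * M * P) i j = M i j - (n:ℝ)⁻¹ * (∑ k, M k j) - (n:ℝ)⁻¹ * (∑ l, M i l)
      + (n:ℝ)⁻¹ * (n:ℝ)⁻¹ * (∑ k, ∑ l, M k l) := by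
  have hPM : ∀ a c : Fin n, (P * M) a c = M a c - (n:ℝ)⁻¹ * ∑ k, M k c := by
    intro a c
    simp [hP, hJ, Matrix.mul_apply, Matrix.sub_apply, Matrix.one_apply, Matrix.smul_apply,
      sub_mul, Finset.sum_sub_distrib, Finset.sum_ite_eq, Finset.mul_sum]
  have h0 : (P * M * P) i j = ∑ l, (P * M) i l * P l j := by rw [Matrix.mul_apply]
  rw [h0]
  simp only [hPM]
  simp only [hP, hJ, Matrix.sub_apply, Matrix.one_apply, Matrix.smul_apply, Matrix.of_apply,
    smul_eq_mul, mul_one]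
  rw [Finset.sum_congr rfl (fun l _ => by ring :
    ∀ l ∈ Finset.univ, (M i l - (n:ℝ)⁻¹ * ∑ k, M k l) * ((if l = j then (1:ℝ) else 0) - (n:ℝ)⁻¹)
      = (if l = j then (1:ℝ) else 0) * M i l - (if l = j then (1:ℝ) else 0) * ((n:ℝ)⁻¹ * ∑ k, M k l)
        - (n:ℝ)⁻¹ * M i l + (n:ℝ)⁻¹ * ((n:ℝ)⁻¹ * ∑ k, M k l))]
  simp only [Finset.sum_add_distrib, Finset.sum_sub_distrib, ite_mul, one_mul, zero_mul,
    Finset.sum_ite_eq', Finset.mem_univ, if_true, ← Finset.mul_sum]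
  rw [Finset.sum_comm]
  ring

private lemma aux_dist {n : ℕ} (S : Matrix (Fin n) (Fin n) ℝ) (hsym : ∀ p q, S p q = S q p)
    (i j : Fin n) :
    dist ((WithLp.equiv 2 (Fin n → ℝ)).symm (fun k => S k i))
      ((WithLp.equiv 2 (Fin n → ℝ)).symm (fun k => S k j)) ^ 2
      = (S*S) i i + (S*S) j j - 2 * (S*S) i j := by
  rw [EuclideanSpace.dist_eq, Real.sq_sqrt (by positivity)]
  simp only [WithLp.equiv_symm_apply, WithLp.ofLp_toLp, Real.dist_eq, sq_abs]
  have h1 : ∀ k, (S k i - S k j)^2 = S i k * S k i + S j k * S k j - 2 * (S i k * S k j) := by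
    intro k; rw [hsym i k, hsym j k]; ring
  rw [Finset.sum_congr rfl fun k _ => h1 k]
  simp only [Finset.sum_sub_distrib, Finset.sum_add_distrib, ← Finset.mul_sum, Matrix.mul_apply]

section
open scoped MatrixOrder

private noncomputable def Matrix.PosSemidef.sqrt {n : ℕ} {N : Matrix (Fin n) (Fin n) ℝ}
    (_h : N.PosSemidef) : Matrix (Fin n) (Fin n) ℝ := CFC.sqrt N

private lemma Matrix.PosSemidef.sqrt_mul_self {n : ℕ} {N : Matrix (Fin n) (Fin n) ℝ}
    (h : N.PosSemidef) : h.sqrt * h.sqrt = N := CFC.sqrt_mul_sqrt_self N h.nonneg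

private lemma Matrix.PosSemidef.posSemidef_sqrt {n : ℕ} {N : Matrix (Fin n) (Fin n) ℝ}
    (h : N.PosSemidef) : h.sqrt.PosSemidef := (CFC.sqrt_nonneg N).posSemidef

end

theorem stmt_4 (n : ℕ) (hn : 0 < n) (G : SimpleGraph (Fin n)) [DecidableRel G.Adj]
    (A : Matrix (Fin n) (Fin n) ℝ) (hA : A = G.adjMatrix ℝ)
    (τ₁ : ℝ)
    (hτeig : ∃ w ≠ 0, A *ᵥ w = τ₁ • w)
    (hτmin : ∀ μ : ℝ, (∃ w ≠ 0, A *ᵥ w = μ • w) → τ₁ ≤ μ)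
    (hτ : τ₁ < -1)
    (b : ℝ) (hb : b = τ₁ / (τ₁ + 1))
    (J : Matrix (Fin n) (Fin n) ℝ) (hJ : J = Matrix.of fun _ _ => (1 : ℝ))
    (M : Matrix (Fin n) (Fin n) ℝ) (hM : M = A + b • (J - 1 - A))
    (P : Matrix (Fin n) (Fin n) ℝ) (hP : P = 1 - (n : ℝ)⁻¹ • J) :
    (∀ i, M i i = 0) ∧ (∀ i j, i ≠ j → 0 < M i j) ∧
    (-(P * M * P)).PosSemidef ∧
    (∃ x : Fin n → EuclideanSpace ℝ (Fin n),
        ∀ i j, M i j = dist (x i) (x j) ^ 2) := by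
  have hn' : (n : ℝ) ≠ 0 := Nat.cast_ne_zero.mpr hn.ne'
  have hτ1 : τ₁ + 1 < 0 := by linarith
  have hτ1' : τ₁ + 1 ≠ 0 := ne_of_lt hτ1
  have hbpos : 0 < b := by
    rw [hb]; exact div_pos_of_neg_of_neg (by linarith) hτ1
  have hb1 : 0 < b - 1 := by
    have : b - 1 = (-1) / (τ₁ + 1) := by rw [hb]; field_simp; ring
    rw [this]; exact div_pos_of_neg_of_neg (by norm_num) hτ1
  have hbτ : (b - 1) * τ₁ = -b := by rw [hb]; field_simp; ring
  -- diagonal zero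
  have hdiag : ∀ i, M i i = 0 := by
    intro i
    simp [hM, hA, hJ, Matrix.add_apply, Matrix.smul_apply, Matrix.sub_apply, Matrix.one_apply]
  -- symmetry of M
  have hAh : A.IsHermitian := by
    unfold Matrix.IsHermitian
    ext p q
    simp [hA, Matrix.conjTranspose_apply, SimpleGraph.adjMatrix_apply, G.adj_comm]
  have hAsym : ∀ p q, A p q = A q p := by
    intro p q
    conv_rhs => rw [← hAh.eq]
    simp [Matrix.conjTranspose_apply]
  have hMsym : ∀ p q, M p q = M q p := by
    intro p q
    simp only [hM, hJ, Matrix.add_apply, Matrix.smul_apply, Matrix.sub_apply, Matrix.one_apply,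
      Matrix.of_apply, hAsym p q, smul_eq_mul]
    rw [show ((if p = q then (1:ℝ) else 0)) = (if q = p then (1:ℝ) else 0) by simp [eq_comm]]
  -- off-diagonal positive
  have hoff : ∀ i j, i ≠ j → 0 < M i j := by
    intro i j hij
    have : M i j = if G.Adj i j then 1 else b := by
      by_cases h : G.Adj i j <;>
        simp [hM, hA, hJ, Matrix.add_apply, Matrix.smul_apply, Matrix.sub_apply,
          Matrix.one_apply, hij, h]
    rw [this]
    split <;> [norm_num; exact hbpos]
  -- P * J = 0 and Pᴴ = P
  have hPJ : P * J = 0 := by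
    rw [hP, hJ]
    ext i j
    simp [Matrix.mul_apply, Matrix.sub_apply, Matrix.one_apply, Matrix.smul_apply,
      sub_mul, Finset.sum_sub_distrib, Finset.sum_ite_eq]
    field_simp; simp
  have hPh : Pᴴ = P := by
    rw [hP, hJ]
    ext i j
    simp [Matrix.conjTranspose_apply, Matrix.one_apply, eq_comm]
  -- key identity
  have hkey : -(P * M * P) = Pᴴ * ((b - 1) • (A - τ₁ • 1)) * P := by
    rw [hPh]
    have hPJP : P * J * P = 0 := by rw [hPJ, Matrix.zero_mul]
    have e1 : P * ((b - 1) • (A - τ₁ • 1)) * P = (b-1) • (P*A*P) + b • (P*P) := by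
      simp only [Matrix.mul_smul, Matrix.smul_mul, Matrix.mul_sub, Matrix.sub_mul,
        Matrix.mul_one, Matrix.one_mul, smul_smul, hbτ, smul_sub]
      module
    have e2 : P * M * P = (1-b) • (P*A*P) - b • (P*P) := by
      rw [hM]
      simp only [Matrix.mul_add, Matrix.add_mul, Matrix.mul_smul, Matrix.smul_mul,
        Matrix.mul_sub, Matrix.sub_mul, Matrix.mul_one, Matrix.one_mul, hPJP, smul_sub]
      module
    rw [e1, e2]
    module
  have hNpsd : ((b - 1) • (A - τ₁ • 1)).PosSemidef :=
    aux_psd_smul (aux_psd_shift A hAh τ₁ hτmin) hb1.le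
  have hPSD : (-(P * M * P)).PosSemidef := by
    rw [hkey]; exact hNpsd.conjTranspose_mul_mul_same P
  refine ⟨hdiag, hoff, hPSD, ?_⟩
  -- EDM construction
  have hBpsd : ((2:ℝ)⁻¹ • -(P * M * P)).PosSemidef := aux_psd_smul hPSD (by norm_num)
  have hSS : hBpsd.sqrt * hBpsd.sqrt = (2:ℝ)⁻¹ • -(P * M * P) := hBpsd.sqrt_mul_self
  have hSsym : ∀ p q, hBpsd.sqrt p q = hBpsd.sqrt q p := by
    intro p q
    conv_rhs => rw [← hBpsd.posSemidef_sqrt.1]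
    simp [Matrix.conjTranspose_apply]
  refine ⟨fun i => (WithLp.equiv 2 (Fin n → ℝ)).symm (fun k => hBpsd.sqrt k i), fun i j => ?_⟩
  rw [aux_dist hBpsd.sqrt hSsym i j, hSS]
  simp only [Matrix.smul_apply, Matrix.neg_apply, smul_eq_mul]
  rw [aux_pmp J P M hJ hP i i, aux_pmp J P M hJ hP j j, aux_pmp J P M hJ hP i j]
  have hrc : ∀ p, (∑ k, M k p) = ∑ k, M p k := fun p =>
    Finset.sum_congr rfl fun k _ => hMsym k p
  rw [hrc i, hrc j, hdiag i, hdiag j]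
  ring
end

section
/- Let G be a simple graph on n vertices with adjacency matrix A whose smallest eigenvalue τ₁ < -1 has multiplicity m₁ and eigenspace E₁. Let b = τ₁/(τ₁+1), M = A + b(J - I - A), and P = I - (1/n)J. If E₁ ⊆ 𝟙^⊥ then rank(PMP) = n - m₁ - 1, and otherwise rank(PMP) = n - m₁. -/
set_option maxHeartbeats 1000000
set_option synthInstance.maxHeartbeats 400000


open Matrix

theorem stmt_5 (n : ℕ) (hn : 0 < n) (G : SimpleGraph (Fin n)) [DecidableRel G.Adj]
    (A : Matrix (Fin n) (Fin n) ℝ) (hA : A = G.adjMatrix ℝ)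
    (τ₁ : ℝ)
    (hτeig : ∃ w ≠ 0, A *ᵥ w = τ₁ • w)
    (hτmin : ∀ μ : ℝ, (∃ w ≠ 0, A *ᵥ w = μ • w) → τ₁ ≤ μ)
    (hτ : τ₁ < -1)
    (E₁ : Submodule ℝ (Fin n → ℝ))
    (hE₁ : E₁ = Module.End.eigenspace (Matrix.mulVecLin A) τ₁)
    (m₁ : ℕ) (hm₁ : m₁ = Module.finrank ℝ E₁)
    (b : ℝ) (hb : b = τ₁ / (τ₁ + 1))
    (J : Matrix (Fin n) (Fin n) ℝ) (hJ : J = Matrix.of fun _ _ => (1 : ℝ))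
    (M : Matrix (Fin n) (Fin n) ℝ) (hM : M = A + b • (J - 1 - A))
    (P : Matrix (Fin n) (Fin n) ℝ) (hP : P = 1 - (n : ℝ)⁻¹ • J) :
    ((∀ w ∈ E₁, ∑ i, w i = 0) → (P * M * P).rank = n - m₁ - 1) ∧
    (¬ (∀ w ∈ E₁, ∑ i, w i = 0) → (P * M * P).rank = n - m₁) := by
  classical
  have hτne : τ₁ + 1 ≠ 0 := by intro h; rw [show τ₁ = -1 by linarith] at hτ; linarith
  set B : Matrix (Fin n) (Fin n) ℝ := A - τ₁ • 1 with hB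
  have hcne : 1 - b ≠ 0 := by
    rw [hb]
    intro h
    apply hτne
    field_simp at h
    linarith
  have hbb : (1 - b) * τ₁ = b := by rw [hb]; field_simp; ring
  have hn0 : (n : ℝ) ≠ 0 := Nat.cast_ne_zero.mpr hn.ne'
  have hJJ : J * J = (n : ℝ) • J := by
    ext i j
    simp [hJ, Matrix.mul_apply, Matrix.smul_apply]
  have hPJ : P * J = 0 := by
    rw [hP, Matrix.sub_mul, Matrix.one_mul, Matrix.smul_mul, hJJ, smul_smul,
      inv_mul_cancel₀ hn0, one_smul, sub_self]
  have hMB : M = (1 - b) • B + b • J := by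
    rw [hM, hB]
    ext i j
    simp only [Matrix.add_apply, Matrix.smul_apply, Matrix.sub_apply, smul_eq_mul]
    linear_combination ((1 : Matrix (Fin n) (Fin n) ℝ) i j) * hbb
  have hPMP : P * M * P = (1 - b) • (P * B * P) := by
    rw [hMB, Matrix.mul_add, Matrix.add_mul, Matrix.mul_smul, Matrix.mul_smul,
      Matrix.smul_mul, Matrix.smul_mul, hPJ, Matrix.zero_mul, smul_zero, add_zero]
  -- rank reduction to P*B*P
  have hrank : (P * M * P).rank = (P * B * P).rank := by
    rw [hPMP, Matrix.rank, Matrix.rank]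
    have h : ((1 - b) • (P * B * P)).mulVecLin = (1 - b) • (P * B * P).mulVecLin := by
      refine LinearMap.ext fun x => ?_
      simp only [Matrix.mulVecLin_apply, LinearMap.smul_apply, Matrix.smul_mulVec]
    rw [h, LinearMap.range_smul _ _ hcne]
  -- symmetry
  have hPsym : Pᵀ = P := by
    rw [hP]
    ext i j
    simp [hJ, Matrix.one_apply]
    by_cases h : i = j <;> simp [h, Matrix.one_apply, eq_comm]
  have hAsym : Aᵀ = A := by rw [hA]; exact SimpleGraph.transpose_adjMatrix G
  have hBsym : Bᵀ = B := by
    rw [hB, Matrix.transpose_sub, hAsym, Matrix.transpose_smul, Matrix.transpose_one]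
  have hBherm : B.IsHermitian := by
    rwa [Matrix.IsHermitian, conjTranspose_eq_transpose_of_trivial]
  -- B is positive semidefinite
  have hBpsd : B.PosSemidef := by
    apply hBherm.posSemidef_iff_eigenvalues_nonneg.mpr
    intro i
    set v : Fin n → ℝ := ⇑(hBherm.eigenvectorBasis i) with hv
    have hvne : v ≠ 0 := (WithLp.ofLp_eq_zero 2).not.mpr (hBherm.eigenvectorBasis.orthonormal.ne_zero i)
    have hveq : B *ᵥ v = hBherm.eigenvalues i • v := hBherm.mulVec_eigenvectorBasis i
    have hAv : A *ᵥ v = (hBherm.eigenvalues i + τ₁) • v := by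
      have : B *ᵥ v = A *ᵥ v - τ₁ • v := by
        rw [hB, Matrix.sub_mulVec, Matrix.smul_mulVec, Matrix.one_mulVec]
      rw [this] at hveq
      rw [add_smul]
      linear_combination (norm := module) hveq
    have := hτmin _ ⟨v, hvne, hAv⟩
    linarith [show (0 : Fin n → ℝ) i = 0 from rfl]
  -- the all-ones vector and sum functional
  have i0 : Fin n := ⟨0, hn⟩
  set ones : Fin n → ℝ := fun _ => 1 with hones
  have honesne : ones ≠ 0 := by
    intro h
    have := congrFun h i0
    simp [hones] at this
  have hPv : ∀ x : Fin n → ℝ, P *ᵥ x = x - ((∑ i, x i) / n) • ones := by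
    intro x
    have hJx : J *ᵥ x = (∑ j, x j) • ones := by
      ext i
      simp [hJ, Matrix.mulVec, dotProduct, hones]
    rw [hP, Matrix.sub_mulVec, Matrix.one_mulVec, Matrix.smul_mulVec, hJx, smul_smul,
      inv_mul_eq_div]
  have hPones : P *ᵥ ones = 0 := by
    have hs : (∑ i, ones i) = (n : ℝ) := by simp [hones]
    rw [hPv, hs, div_self hn0, one_smul, sub_self]
  have hPfix : ∀ x : Fin n → ℝ, (∑ i, x i) = 0 → P *ᵥ x = x := by
    intro x hx
    rw [hPv, hx]
    simp
  have hsumP : ∀ x : Fin n → ℝ, ∑ i, (P *ᵥ x) i = 0 := by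
    intro x
    rw [hPv]
    simp only [Pi.sub_apply, Pi.smul_apply, hones, smul_eq_mul, mul_one,
      Finset.sum_sub_distrib, Finset.sum_const, Finset.card_univ, Fintype.card_fin,
      nsmul_eq_mul]
    field_simp
    ring
  -- kernel of B is E₁
  have hBker : ∀ v : Fin n → ℝ, B *ᵥ v = 0 ↔ v ∈ E₁ := by
    intro v
    rw [hE₁, Module.End.mem_eigenspace_iff, Matrix.mulVecLin_apply, hB,
      Matrix.sub_mulVec, Matrix.smul_mulVec, Matrix.one_mulVec, sub_eq_zero]
  -- PSD kernel step
  have hPBP : ∀ x : Fin n → ℝ, (P * B * P) *ᵥ x = 0 ↔ B *ᵥ (P *ᵥ x) = 0 := by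
    intro x
    have hcomp : (P * B * P) *ᵥ x = P *ᵥ (B *ᵥ (P *ᵥ x)) := by
      rw [Matrix.mulVec_mulVec, Matrix.mulVec_mulVec]
    rw [hcomp]
    constructor
    · intro h
      have h1 : x ⬝ᵥ (P *ᵥ (B *ᵥ (P *ᵥ x))) = 0 := by rw [h]; simp
      have hx : x ᵥ* P = P *ᵥ x := by
        nth_rewrite 1 [← hPsym]
        exact Matrix.vecMul_transpose P x
      have h2 : (P *ᵥ x) ⬝ᵥ (B *ᵥ (P *ᵥ x)) = 0 := by
        rw [Matrix.dotProduct_mulVec, hx] at h1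
        exact h1
      exact (hBpsd.dotProduct_mulVec_zero_iff (P *ᵥ x)).mp (by rwa [star_trivial])
    · intro h
      rw [h, Matrix.mulVec_zero]
  -- the sum linear functional
  set ℓ : (Fin n → ℝ) →ₗ[ℝ] ℝ := ∑ i, LinearMap.proj i with hℓ
  have hℓapp : ∀ x : Fin n → ℝ, ℓ x = ∑ i, x i := by
    intro x
    simp [hℓ]
  set S : Submodule ℝ (Fin n → ℝ) := LinearMap.ker ℓ with hS
  have hSmem : ∀ x : Fin n → ℝ, x ∈ S ↔ ∑ i, x i = 0 := by
    intro x
    rw [hS, LinearMap.mem_ker, hℓapp]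
  -- kernel characterization
  have hker : LinearMap.ker (P * B * P).mulVecLin = (E₁ ⊓ S) ⊔ Submodule.span ℝ {ones} := by
    apply le_antisymm
    · intro x hx
      rw [LinearMap.mem_ker, Matrix.mulVecLin_apply] at hx
      have h1 : B *ᵥ (P *ᵥ x) = 0 := (hPBP x).mp hx
      have h2 : P *ᵥ x ∈ E₁ ⊓ S := ⟨(hBker _).mp h1, (hSmem _).mpr (hsumP x)⟩
      have h3 : x - P *ᵥ x ∈ Submodule.span ℝ {ones} := by
        rw [hPv x]
        have : x - (x - ((∑ i, x i) / n) • ones) = ((∑ i, x i) / n) • ones := by abel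
        rw [this]
        exact Submodule.smul_mem _ _ (Submodule.mem_span_singleton_self ones)
      have hxeq : x = (P *ᵥ x) + (x - P *ᵥ x) := by abel
      rw [hxeq]
      exact Submodule.add_mem_sup h2 h3
    · rw [sup_le_iff]
      constructor
      · rintro x ⟨hx1, hx2⟩
        rw [LinearMap.mem_ker, Matrix.mulVecLin_apply]
        rw [(hPBP x), hPfix x ((hSmem x).mp hx2), (hBker x)]
        exact hx1
      · rw [Submodule.span_le, Set.singleton_subset_iff]
        rw [SetLike.mem_coe, LinearMap.mem_ker, Matrix.mulVecLin_apply]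
        rw [hPBP, hPones, Matrix.mulVec_zero]
    -- dimensions
  have hdisj : (E₁ ⊓ S) ⊓ Submodule.span ℝ {ones} = ⊥ := by
    rw [eq_bot_iff]
    rintro x ⟨⟨_, hxS⟩, hxsp⟩
    obtain ⟨c, rfl⟩ := Submodule.mem_span_singleton.mp hxsp
    have hsum := (hSmem _).mp hxS
    have hcn : c * n = 0 := by
      simpa [hones, Finset.sum_const, mul_comm] using hsum
    have hc : c = 0 := by
      rcases mul_eq_zero.mp hcn with h | h
      · exact h
      · exact absurd h hn0
    simp [hc]
  have hd1 : Module.finrank ℝ (Submodule.span ℝ {ones}) = 1 := finrank_span_singleton honesne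
  have hsupdim : Module.finrank ℝ ((E₁ ⊓ S) ⊔ Submodule.span ℝ {ones} : Submodule ℝ (Fin n → ℝ))
      = Module.finrank ℝ (E₁ ⊓ S : Submodule ℝ (Fin n → ℝ)) + 1 := by
    have h := Submodule.finrank_sup_add_finrank_inf_eq (E₁ ⊓ S) (Submodule.span ℝ {ones})
    rw [hdisj, finrank_bot, hd1, add_zero] at h
    omega
  -- rank-nullity
  have hrn : (P * B * P).rank + Module.finrank ℝ (LinearMap.ker (P * B * P).mulVecLin) = n := by
    rw [Matrix.rank]
    have := LinearMap.finrank_range_add_finrank_ker (P * B * P).mulVecLin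
    rwa [Module.finrank_pi, Fintype.card_fin] at this
  rw [hker, hsupdim] at hrn
  constructor
  · intro h
    have hES : E₁ ⊓ S = E₁ := by
      rw [inf_eq_left]
      intro w hw
      exact (hSmem w).mpr (h w hw)
    rw [hES, ← hm₁] at hrn
    rw [hrank]
    omega
  · intro h
    push_neg at h
    obtain ⟨w, hwE, hws⟩ := h
    set φ : E₁ →ₗ[ℝ] ℝ := ℓ.comp E₁.subtype with hφ
    have hφapp : ∀ x : E₁, φ x = ∑ i, (x : Fin n → ℝ) i := by
      intro x
      simp [hφ, hℓapp]
    have hφsurj : LinearMap.range φ = ⊤ := by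
      rw [LinearMap.range_eq_top]
      intro c
      refine ⟨(c / ∑ i, w i) • ⟨w, hwE⟩, ?_⟩
      have hw1 : φ ⟨w, hwE⟩ = ∑ i, w i := hφapp _
      rw [LinearMap.map_smul, hw1, smul_eq_mul, div_mul_cancel₀ _ hws]
    have hkφ : Module.finrank ℝ (E₁ ⊓ S : Submodule ℝ (Fin n → ℝ))
        = Module.finrank ℝ (LinearMap.ker φ) := by
      have hle : E₁ ⊓ S ≤ E₁ := inf_le_left
      have hcomap : Submodule.comap E₁.subtype (E₁ ⊓ S) = LinearMap.ker φ := by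
        ext x
        simp only [Submodule.mem_comap, Submodule.mem_inf, hS, hφ, LinearMap.mem_ker,
          LinearMap.comp_apply, Submodule.subtype_apply]
        exact ⟨fun h => h.2, fun h => ⟨x.2, h⟩⟩
      have hEq : Module.finrank ℝ (Submodule.comap E₁.subtype (E₁ ⊓ S))
          = Module.finrank ℝ (E₁ ⊓ S : Submodule ℝ (Fin n → ℝ)) :=
        (Submodule.comapSubtypeEquivOfLe hle).finrank_eq
      rw [hcomap] at hEq
      exact hEq.symm
    have hrnφ := LinearMap.finrank_range_add_finrank_ker φ
    rw [hφsurj, finrank_top, ← hm₁] at hrnφ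
    have hftop : Module.finrank ℝ ℝ = 1 := Module.finrank_self ℝ
    rw [hftop] at hrnφ
    rw [hkφ] at hrn
    rw [hrank]
    omega
end

section
/- Let A be the adjacency matrix of a simple graph, let b > 1, and set X = (1-b)A - bI. If M = A + b(J - I - A) is a Euclidean distance matrix, then X has at most one positive eigenvalue. -/
open Matrix

lemma edm_quad_aux {n m : ℕ} (x : Fin n → EuclideanSpace ℝ (Fin m)) (v : Fin n → ℝ)
    (hv : ∑ k, v k = 0) :
    ∑ i, ∑ j, v i * v j * dist (x i) (x j) ^ 2 ≤ 0 := by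
  set y : EuclideanSpace ℝ (Fin m) := ∑ i, v i • x i with hy
  have hinner : ∑ i, ∑ j, v i * v j * (inner ℝ (x i) (x j) : ℝ) = inner ℝ y y := by
    rw [hy, sum_inner]
    refine Finset.sum_congr rfl fun i _ => ?_
    rw [real_inner_smul_left, inner_sum, Finset.mul_sum]
    refine Finset.sum_congr rfl fun j _ => ?_
    rw [real_inner_smul_right]; ring
  have expand : ∀ i j, v i * v j * dist (x i) (x j) ^ 2 =
      v i * ‖x i‖ ^ 2 * v j + v i * (v j * ‖x j‖ ^ 2)
        - 2 * (v i * v j * (inner ℝ (x i) (x j) : ℝ)) := by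
    intro i j
    rw [dist_eq_norm, norm_sub_sq_real]; ring
  calc ∑ i, ∑ j, v i * v j * dist (x i) (x j) ^ 2
      = (∑ i, v i * ‖x i‖ ^ 2) * (∑ j, v j) + (∑ i, v i) * (∑ j, v j * ‖x j‖ ^ 2)
        - 2 * (inner ℝ y y : ℝ) := by
        simp only [expand, Finset.sum_sub_distrib, Finset.sum_add_distrib, ← Finset.mul_sum,
          ← Finset.sum_mul, ← hinner]
    _ ≤ 0 := by
        rw [hv]
        simp only [mul_zero, zero_mul, add_zero, zero_add]
        nlinarith [real_inner_self_nonneg (x := y)]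

theorem stmt_6 (n : ℕ) (G : SimpleGraph (Fin n)) [DecidableRel G.Adj]
    (A : Matrix (Fin n) (Fin n) ℝ) (hA : A = G.adjMatrix ℝ)
    (b : ℝ) (hb : 1 < b)
    (J : Matrix (Fin n) (Fin n) ℝ) (hJ : J = Matrix.of fun _ _ => (1 : ℝ))
    (X : Matrix (Fin n) (Fin n) ℝ) (hX : X = (1 - b) • A - b • (1 : Matrix (Fin n) (Fin n) ℝ))
    (hXh : X.IsHermitian)
    (M : Matrix (Fin n) (Fin n) ℝ) (hM : M = A + b • (J - 1 - A))
    (hEDM : ∃ (m : ℕ) (x : Fin n → EuclideanSpace ℝ (Fin m)),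
        ∀ i j, M i j = dist (x i) (x j) ^ 2) :
    (Finset.univ.filter fun i => 0 < hXh.eigenvalues i).card ≤ 1 := by
  by_contra hcard
  push_neg at hcard
  obtain ⟨i, hi, j, hj, hij⟩ := Finset.one_lt_card.mp hcard
  rw [Finset.mem_filter] at hi hj
  have hli : 0 < hXh.eigenvalues i := hi.2
  have hlj : 0 < hXh.eigenvalues j := hj.2
  set u : Fin n → (Fin n → ℝ) := fun a => (hXh.eigenvectorBasis a : Fin n → ℝ) with hu
  have orth : ∀ a c, u a ⬝ᵥ u c = if a = c then 1 else 0 := by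
    have horth := hXh.eigenvectorBasis.orthonormal
    rw [orthonormal_iff_ite] at horth
    intro a c
    have h2 := horth a c
    simpa [PiLp.inner_apply, RCLike.inner_apply, dotProduct, hu, mul_comm] using h2
  set s : Fin n → ℝ := fun a => ∑ k, u a k with hs
  obtain ⟨α, β, hαβ, hsum0⟩ : ∃ α β : ℝ, ¬(α = 0 ∧ β = 0) ∧ α * s i + β * s j = 0 := by
    by_cases hc : s i = 0 ∧ s j = 0
    · exact ⟨1, 0, by simp, by simp [hc.1, hc.2]⟩
    · exact ⟨s j, -s i, by rintro ⟨h1, h2⟩; exact hc ⟨neg_eq_zero.mp h2, h1⟩, by ring⟩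
  set v : Fin n → ℝ := fun k => α * u i k + β * u j k with hv
  have hvsum : ∑ k, v k = 0 := by
    simp only [hv, Finset.sum_add_distrib, ← Finset.mul_sum]
    exact hsum0
  -- eigen computation
  have hveq : v = α • u i + β • u j := rfl
  have hXui : X *ᵥ u i = hXh.eigenvalues i • u i := hXh.mulVec_eigenvectorBasis i
  have hXuj : X *ᵥ u j = hXh.eigenvalues j • u j := hXh.mulVec_eigenvectorBasis j
  have qv : v ⬝ᵥ (X *ᵥ v) = α ^ 2 * hXh.eigenvalues i + β ^ 2 * hXh.eigenvalues j := by
    rw [hveq, mulVec_add, mulVec_smul, mulVec_smul, hXui, hXuj]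
    simp only [dotProduct_add, add_dotProduct, smul_dotProduct, dotProduct_smul, smul_eq_mul,
      orth, if_pos rfl, hij, if_neg hij, if_neg (Ne.symm hij), if_true, if_false]
    ring
  have qvpos : 0 < v ⬝ᵥ (X *ᵥ v) := by
    rw [qv]
    rcases not_and_or.mp hαβ with hα | hβ
    · have : 0 < α ^ 2 := by positivity
      nlinarith
    · have : 0 < β ^ 2 := by positivity
      nlinarith
  -- EDM side
  have hXM : X = M - b • J := by
    rw [hX, hM]
    module
  have hJv : J *ᵥ v = 0 := by
    ext k
    simp [hJ, mulVec, dotProduct, hvsum]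
  have qv0 : v ⬝ᵥ (X *ᵥ v) ≤ 0 := by
    rw [hXM, sub_mulVec, smul_mulVec, hJv, smul_zero, sub_zero]
    obtain ⟨m, x, hx⟩ := hEDM
    have key := edm_quad_aux x v hvsum
    have : v ⬝ᵥ (M *ᵥ v) = ∑ a, ∑ c, v a * v c * dist (x a) (x c) ^ 2 := by
      simp only [dotProduct, mulVec, Finset.mul_sum]
      refine Finset.sum_congr rfl fun a _ => Finset.sum_congr rfl fun c _ => ?_
      rw [hx a c]; ring
    linarith [this ▸ key]
  linarith
end

section
/- Let A be the adjacency matrix of a simple graph whose second smallest distinct eigenvalue τ₂ satisfies τ₂ < -1. If b > 1 and M = A + b(J - I - A) is a Euclidean distance matrix, then b ≤ τ₂/(τ₂+1). -/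
open Matrix

private lemma edm_quad' (n m : ℕ) (M : Matrix (Fin n) (Fin n) ℝ)
    (x : Fin n → EuclideanSpace ℝ (Fin m))
    (hMx : ∀ i j, M i j = dist (x i) (x j) ^ 2)
    (v : Fin n → ℝ) (hv : ∑ i, v i = 0) :
    v ⬝ᵥ (M *ᵥ v) ≤ 0 := by
  set y : EuclideanSpace ℝ (Fin m) := ∑ i, v i • x i with hy
  have hyy : (inner ℝ y y : ℝ) = ∑ i, ∑ j, v i * v j * inner ℝ (x i) (x j) := by
    rw [hy, sum_inner]
    refine Finset.sum_congr rfl fun i _ => ?_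
    rw [inner_sum]
    refine Finset.sum_congr rfl fun j _ => ?_
    rw [real_inner_smul_left, real_inner_smul_right]; ring
  have key : v ⬝ᵥ (M *ᵥ v) = -2 * inner ℝ y y := by
    rw [hyy]
    have : v ⬝ᵥ (M *ᵥ v)
        = ∑ i, ∑ j, v i * v j * (‖x i‖^2 - 2 * inner ℝ (x i) (x j) + ‖x j‖^2) := by
      simp only [dotProduct, mulVec, Finset.mul_sum]
      refine Finset.sum_congr rfl fun i _ => Finset.sum_congr rfl fun j _ => ?_
      rw [hMx i j, dist_eq_norm, @norm_sub_sq_real]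
      ring
    rw [this]
    have e1 : ∑ i, ∑ j, v i * v j * (‖x i‖^2 - 2 * inner ℝ (x i) (x j) + ‖x j‖^2)
        = (∑ i, v i * ‖x i‖^2) * (∑ j, v j)
          - 2 * (∑ i, ∑ j, v i * v j * inner ℝ (x i) (x j))
          + (∑ i, v i) * (∑ j, v j * ‖x j‖^2) := by
      rw [Finset.sum_mul_sum, Finset.sum_mul_sum, Finset.mul_sum, ← Finset.sum_sub_distrib]
      rw [← Finset.sum_add_distrib]
      refine Finset.sum_congr rfl fun i _ => ?_
      rw [Finset.mul_sum, ← Finset.sum_sub_distrib, ← Finset.sum_add_distrib]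
      refine Finset.sum_congr rfl fun j _ => ?_
      ring
    rw [e1, hv]; ring
  rw [key]
  have := real_inner_self_nonneg (x := y)
  linarith

private lemma dp_self_pos {n : ℕ} {v : Fin n → ℝ} (hv : v ≠ 0) : 0 < v ⬝ᵥ v := by
  have h0 : 0 ≤ v ⬝ᵥ v := Finset.sum_nonneg fun i _ => mul_self_nonneg _
  rcases h0.lt_or_eq with h | h
  · exact h
  · exact absurd (dotProduct_self_eq_zero.mp h.symm) hv

theorem stmt_7 (n : ℕ) (G : SimpleGraph (Fin n)) [DecidableRel G.Adj]
    (A : Matrix (Fin n) (Fin n) ℝ) (hA : A = G.adjMatrix ℝ)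
    (τ₁ τ₂ : ℝ) (hlt : τ₁ < τ₂)
    (hτ₁eig : ∃ w ≠ 0, A *ᵥ w = τ₁ • w)
    (hτ₂eig : ∃ w ≠ 0, A *ᵥ w = τ₂ • w)
    (hτ₁min : ∀ μ : ℝ, (∃ w ≠ 0, A *ᵥ w = μ • w) → τ₁ ≤ μ)
    (hτ₂second : ∀ μ : ℝ, (∃ w ≠ 0, A *ᵥ w = μ • w) → μ = τ₁ ∨ τ₂ ≤ μ)
    (hτ₂ : τ₂ < -1)
    (b : ℝ) (hb : 1 < b)
    (J : Matrix (Fin n) (Fin n) ℝ) (hJ : J = Matrix.of fun _ _ => (1 : ℝ))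
    (M : Matrix (Fin n) (Fin n) ℝ) (hM : M = A + b • (J - 1 - A))
    (hEDM : ∃ (m : ℕ) (x : Fin n → EuclideanSpace ℝ (Fin m)),
        ∀ i j, M i j = dist (x i) (x j) ^ 2) :
    b ≤ τ₂ / (τ₂ + 1) := by
  obtain ⟨w₁, hw₁, he₁⟩ := hτ₁eig
  obtain ⟨w₂, hw₂, he₂⟩ := hτ₂eig
  obtain ⟨m, x, hx⟩ := hEDM
  have hsymm : Aᵀ = A := by rw [hA]; exact SimpleGraph.transpose_adjMatrix G
  have hswap : ∀ u w : Fin n → ℝ, (A *ᵥ u) ⬝ᵥ w = u ⬝ᵥ (A *ᵥ w) := fun u w => by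
    rw [dotProduct_mulVec, ← mulVec_transpose, hsymm]
  -- orthogonality
  have horth : w₁ ⬝ᵥ w₂ = 0 := by
    have h1 : τ₁ * (w₁ ⬝ᵥ w₂) = τ₂ * (w₁ ⬝ᵥ w₂) := by
      calc τ₁ * (w₁ ⬝ᵥ w₂) = (τ₁ • w₁) ⬝ᵥ w₂ := by rw [smul_dotProduct]; rfl
        _ = (A *ᵥ w₁) ⬝ᵥ w₂ := by rw [he₁]
        _ = w₁ ⬝ᵥ (A *ᵥ w₂) := hswap w₁ w₂
        _ = w₁ ⬝ᵥ (τ₂ • w₂) := by rw [he₂]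
        _ = τ₂ * (w₁ ⬝ᵥ w₂) := by rw [dotProduct_smul]; rfl
    have : (τ₁ - τ₂) * (w₁ ⬝ᵥ w₂) = 0 := by ring_nf; linarith
    rcases mul_eq_zero.mp this with h | h
    · exact absurd h (by intro h'; linarith [sub_eq_zero.mp h'])
    · exact h
  -- construct a suitable sum-zero vector v
  obtain ⟨v, hvsum, hvpos, hvA⟩ :
      ∃ v : Fin n → ℝ, (∑ i, v i = 0) ∧ 0 < v ⬝ᵥ v ∧
        v ⬝ᵥ (A *ᵥ v) ≤ τ₂ * (v ⬝ᵥ v) := by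
    set s₁ := ∑ i, w₁ i with hs₁
    set s₂ := ∑ i, w₂ i with hs₂
    by_cases hcase : s₂ = 0
    · refine ⟨w₂, hcase, dp_self_pos hw₂, ?_⟩
      rw [he₂, dotProduct_smul]
      exact le_of_eq rfl
    · refine ⟨s₂ • w₁ - s₁ • w₂, ?_, ?_, ?_⟩
      · simp only [Pi.sub_apply, Pi.smul_apply, smul_eq_mul, Finset.sum_sub_distrib,
          ← Finset.mul_sum, ← hs₁, ← hs₂]
        ring
      · apply dp_self_pos
        intro hz
        have hdp : (s₂ • w₁ - s₁ • w₂) ⬝ᵥ w₁ = s₂ * (w₁ ⬝ᵥ w₁) := by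
          rw [sub_dotProduct, smul_dotProduct, smul_dotProduct]
          have : w₂ ⬝ᵥ w₁ = 0 := by rwa [dotProduct_comm] at horth
          rw [this]
          simp
        rw [hz] at hdp
        simp only [zero_dotProduct] at hdp
        have := dp_self_pos hw₁
        have : s₂ * (w₁ ⬝ᵥ w₁) ≠ 0 := mul_ne_zero hcase (by positivity)
        exact this hdp.symm
      · have hAv : A *ᵥ (s₂ • w₁ - s₁ • w₂) = s₂ • (τ₁ • w₁) - s₁ • (τ₂ • w₂) := by
          rw [mulVec_sub, mulVec_smul, mulVec_smul, he₁, he₂]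
        rw [hAv]
        have h21 : w₂ ⬝ᵥ w₁ = 0 := by rwa [dotProduct_comm] at horth
        have q₁pos := dp_self_pos hw₁
        have q₂pos := dp_self_pos hw₂
        have lhs_eq : (s₂ • w₁ - s₁ • w₂) ⬝ᵥ (s₂ • (τ₁ • w₁) - s₁ • (τ₂ • w₂))
            = s₂^2 * τ₁ * (w₁ ⬝ᵥ w₁) + s₁^2 * τ₂ * (w₂ ⬝ᵥ w₂) := by
          simp only [sub_dotProduct, smul_dotProduct, dotProduct_sub, dotProduct_smul,
            smul_eq_mul, horth, h21]
          ring
        have rhs_eq : (s₂ • w₁ - s₁ • w₂) ⬝ᵥ (s₂ • w₁ - s₁ • w₂)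
            = s₂^2 * (w₁ ⬝ᵥ w₁) + s₁^2 * (w₂ ⬝ᵥ w₂) := by
          simp only [sub_dotProduct, smul_dotProduct, dotProduct_sub, dotProduct_smul,
            smul_eq_mul, horth, h21]
          ring
        rw [lhs_eq, rhs_eq]
        nlinarith [sq_nonneg s₁, sq_nonneg s₂, mul_pos (mul_pos (pow_pos (lt_of_le_of_ne (sq_nonneg s₂) (fun h => hcase (by nlinarith)) ) 1) q₁pos) q₁pos]
  -- quadratic form of M on v
  have hJv : J *ᵥ v = 0 := by
    ext i
    simp only [hJ, mulVec, dotProduct, Matrix.of_apply, one_mul]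
    simpa using hvsum
  have hMv : v ⬝ᵥ (M *ᵥ v) = (1 - b) * (v ⬝ᵥ (A *ᵥ v)) - b * (v ⬝ᵥ v) := by
    rw [hM, add_mulVec, smul_mulVec, sub_mulVec, sub_mulVec, hJv, one_mulVec,
      dotProduct_add, dotProduct_smul, dotProduct_sub, dotProduct_sub, dotProduct_zero]
    simp only [smul_eq_mul]
    ring
  have hle : v ⬝ᵥ (M *ᵥ v) ≤ 0 := edm_quad' n m M x hx v hvsum
  rw [hMv] at hle
  -- arithmetic finish
  have ht1 : τ₂ + 1 < 0 := by linarith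
  rw [le_div_iff_of_neg ht1]
  set q := v ⬝ᵥ v
  set qA := v ⬝ᵥ (A *ᵥ v)
  have h2 : (1 - b) * (τ₂ * q) ≤ (1 - b) * qA :=
    mul_le_mul_of_nonpos_left hvA (by linarith)
  nlinarith [hvpos, h2, hle]
end

section
/- Let X be a negative semidefinite symmetric real n×n matrix with null space N, and let P = I - (1/n)J. Then the rank of PXP equals n minus the dimension of the subspace ⟨𝟙⟩ + (N ∩ 𝟙^⊥); in particular rank(PXP) = n - dim(N) - 1 if N ⊆ 𝟙^⊥, and rank(PXP) = n - dim(N) if N ⊄ 𝟙^⊥. -/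
open Matrix

lemma stmt9_aux (n : ℕ) (v : Fin n → ℝ) (hv : ∑ i, v i ≠ 0)
    (S : Submodule ℝ (Fin n → ℝ)) (hS : ∀ w ∈ S, ∑ i, w i = 0) :
    Module.finrank ℝ ↥(Submodule.span ℝ {v} ⊔ S) = Module.finrank ℝ ↥S + 1 := by
  have hv0 : v ≠ 0 := by intro h; apply hv; simp [h]
  have hinf : Submodule.span ℝ {v} ⊓ S = ⊥ := by
    refine le_antisymm ?_ bot_le
    rintro x ⟨hx1, hx2⟩
    obtain ⟨c, rfl⟩ := Submodule.mem_span_singleton.mp hx1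
    have hsum : c * ∑ i, v i = 0 := by
      simpa [Finset.mul_sum] using hS _ hx2
    rcases mul_eq_zero.mp hsum with hc | hc
    · simp [hc]
    · exact absurd hc hv
  have h := Submodule.finrank_sup_add_finrank_inf_eq (Submodule.span ℝ {v}) S
  rw [hinf, finrank_span_singleton hv0] at h
  simp at h
  omega

theorem stmt_9 (n : ℕ) (hn : 0 < n)
    (X : Matrix (Fin n) (Fin n) ℝ) (hsymm : X.IsSymm)
    (hnsd : (-X).PosSemidef)
    (N : Submodule ℝ (Fin n → ℝ)) (hN : N = LinearMap.ker (Matrix.mulVecLin X))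
    (onesPerp : Submodule ℝ (Fin n → ℝ))
    (hperp : onesPerp = LinearMap.ker (Matrix.mulVecLin ((Matrix.of fun _ _ => (1 : ℝ)) : Matrix (Fin n) (Fin n) ℝ)))
    (P : Matrix (Fin n) (Fin n) ℝ)
    (hP : P = 1 - (n : ℝ)⁻¹ • (Matrix.of fun _ _ => (1 : ℝ))) :
    (P * X * P).rank
      = n - Module.finrank ℝ ((Submodule.span ℝ {(fun _ => (1 : ℝ) : Fin n → ℝ)} ⊔ (N ⊓ onesPerp) : Submodule ℝ (Fin n → ℝ)))
    ∧ (N ≤ onesPerp → (P * X * P).rank = n - Module.finrank ℝ N - 1)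
    ∧ (¬ N ≤ onesPerp → (P * X * P).rank = n - Module.finrank ℝ N) := by
  have hnR : (n : ℝ) ≠ 0 := Nat.cast_ne_zero.mpr hn.ne'
  set one : Fin n → ℝ := (fun _ => 1) with hone
  set J : Matrix (Fin n) (Fin n) ℝ := Matrix.of fun _ _ => (1 : ℝ) with hJ
  have hJv : ∀ v : Fin n → ℝ, J.mulVec v = fun _ => ∑ i, v i := by
    intro v; funext i
    simp [hJ, Matrix.mulVec, dotProduct]
  have hmem : ∀ v : Fin n → ℝ, v ∈ onesPerp ↔ ∑ i, v i = 0 := by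
    intro v
    rw [hperp, LinearMap.mem_ker, Matrix.mulVecLin_apply, hJv v]
    constructor
    · intro h; have := congrFun h ⟨0, hn⟩; simpa using this
    · intro h; funext i; simp [h]
  have hPv : ∀ v : Fin n → ℝ, P.mulVec v = v - ((n : ℝ)⁻¹ * ∑ i, v i) • one := by
    intro v
    rw [hP, Matrix.sub_mulVec, Matrix.one_mulVec, Matrix.smul_mulVec, hJv v]
    funext i
    simp [hone, mul_comm]
  have hPone : P.mulVec one = 0 := by
    rw [hPv]
    have hs : ∑ i : Fin n, (1:ℝ) = n := by simp
    simp only [hone] at hs ⊢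
    rw [hs, inv_mul_cancel₀ hnR]
    funext i; simp
  have hsum_one : ∑ i, one i = (n : ℝ) := by simp [hone]
  -- decompose -X
  obtain ⟨B, hB⟩ : ∃ B : Matrix (Fin n) (Fin n) ℝ, -X = Bᴴ * B := by
    open scoped MatrixOrder in
    obtain ⟨B, hB⟩ := CStarAlgebra.nonneg_iff_eq_star_mul_self.mp hnsd.nonneg
    exact ⟨B, hB⟩
  have hPH : Pᴴ = P := by
    rw [hP]
    ext i j
    simp [hJ, Matrix.conjTranspose_apply, Matrix.one_apply, eq_comm]
  have key : (B * P)ᴴ * (B * P) = -(P * X * P) := by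
    rw [Matrix.conjTranspose_mul, hPH, Matrix.mul_assoc, ← Matrix.mul_assoc Bᴴ B P, ← hB]
    simp [Matrix.mul_neg, Matrix.neg_mul, Matrix.mul_assoc]
  have hkneg : ∀ M : Matrix (Fin n) (Fin n) ℝ,
      LinearMap.ker (-M).mulVecLin = LinearMap.ker M.mulVecLin := by
    intro M; ext v
    simp [Matrix.mulVecLin_apply, Matrix.neg_mulVec, neg_eq_zero]
  have hker1 : LinearMap.ker (B * P).mulVecLin = LinearMap.ker (P * X * P).mulVecLin := by
    rw [← Matrix.ker_mulVecLin_conjTranspose_mul_self (B * P), key, hkneg]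
  have hkerB : LinearMap.ker B.mulVecLin = N := by
    rw [hN, ← hkneg X, hB, Matrix.ker_mulVecLin_conjTranspose_mul_self]
  have hcomp : LinearMap.ker (B * P).mulVecLin = Submodule.comap P.mulVecLin N := by
    rw [Matrix.mulVecLin_mul, LinearMap.ker_comp, hkerB]
  set K : Submodule ℝ (Fin n → ℝ) := Submodule.span ℝ {one} ⊔ (N ⊓ onesPerp) with hKdef
  have hK : Submodule.comap P.mulVecLin N = K := by
    apply le_antisymm
    · intro v hv
      simp only [Submodule.mem_comap, Matrix.mulVecLin_apply] at hv
      have h2 : P.mulVec v ∈ onesPerp := by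
        rw [hmem, hPv]
        have hsv : ∑ i, (v - ((n:ℝ)⁻¹ * ∑ i, v i) • one) i
            = ∑ i, v i - (n:ℝ) * ((n:ℝ)⁻¹ * ∑ i, v i) := by
          simp [hone, Finset.sum_sub_distrib, mul_comm]
        rw [hsv]
        rw [← mul_assoc, mul_inv_cancel₀ hnR, one_mul, sub_self]
      have hdec : v = ((n:ℝ)⁻¹ * ∑ i, v i) • one + P.mulVec v := by
        rw [hPv]; abel
      rw [hdec]
      exact Submodule.add_mem _
        (Submodule.mem_sup_left (Submodule.smul_mem _ _ (Submodule.mem_span_singleton_self one)))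
        (Submodule.mem_sup_right ⟨hv, h2⟩)
    · apply sup_le
      · rw [Submodule.span_le, Set.singleton_subset_iff]
        simp only [SetLike.mem_coe, Submodule.mem_comap, Matrix.mulVecLin_apply, hPone]
        exact N.zero_mem
      · rintro v ⟨hv1, hv2⟩
        simp only [Submodule.mem_comap, Matrix.mulVecLin_apply]
        have : P.mulVec v = v := by rw [hPv, (hmem v).mp hv2]; simp
        rw [this]; exact hv1
  have hrank : ∀ M : Matrix (Fin n) (Fin n) ℝ,
      M.rank = n - Module.finrank ℝ (LinearMap.ker M.mulVecLin) := by
    intro M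
    have h := LinearMap.finrank_range_add_finrank_ker M.mulVecLin
    rw [Module.finrank_pi, Fintype.card_fin] at h
    rw [Matrix.rank]
    omega
  have hKle : Module.finrank ℝ K ≤ n := by
    have := Submodule.finrank_le K
    rwa [Module.finrank_pi, Fintype.card_fin] at this
  have part1 : (P * X * P).rank = n - Module.finrank ℝ K := by
    rw [hrank, ← hker1, hcomp, hK]
  refine ⟨part1, ?_, ?_⟩
  · intro h
    have hNK : K = Submodule.span ℝ {one} ⊔ N := by rw [hKdef, inf_eq_left.mpr h]
    have haux : Module.finrank ℝ K = Module.finrank ℝ N + 1 := by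
      rw [hNK]
      exact stmt9_aux n one (by rw [hsum_one]; exact hnR) N (fun w hw => (hmem w).mp (h hw))
    rw [part1, haux]
    omega
  · intro h
    obtain ⟨v0, hv0N, hv0p⟩ := SetLike.not_le_iff_exists.mp h
    have hv0s : ∑ i, v0 i ≠ 0 := fun h' => hv0p ((hmem v0).mpr h')
    set S : Submodule ℝ (Fin n → ℝ) := N ⊓ onesPerp with hS
    have hSsum : ∀ w ∈ S, ∑ i, w i = 0 := fun w hw => (hmem w).mp hw.2
    have hKr : Module.finrank ℝ K = Module.finrank ℝ S + 1 :=
      stmt9_aux n one (by rw [hsum_one]; exact hnR) S hSsum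
    have hNsup : Submodule.span ℝ {v0} ⊔ S = N := by
      apply le_antisymm
      · exact sup_le (Submodule.span_le.mpr (Set.singleton_subset_iff.mpr hv0N)) inf_le_left
      · intro w hw
        set c : ℝ := (∑ i, w i) / (∑ i, v0 i) with hc
        have hdec : w = c • v0 + (w - c • v0) := by abel
        rw [hdec]
        refine Submodule.add_mem _
          (Submodule.mem_sup_left (Submodule.smul_mem _ _ (Submodule.mem_span_singleton_self v0)))
          (Submodule.mem_sup_right ⟨N.sub_mem hw (N.smul_mem c hv0N), (hmem _).mpr ?_⟩)
        have hsv : ∑ i, (w - c • v0) i = ∑ i, w i - c * ∑ i, v0 i := by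
          simp [Finset.sum_sub_distrib, Finset.mul_sum]
        rw [hsv, hc, div_mul_cancel₀ _ hv0s, sub_self]
    have hNr : Module.finrank ℝ N = Module.finrank ℝ S + 1 := by
      rw [← hNsup]
      exact stmt9_aux n v0 hv0s S hSsum
    rw [part1, hKr, hNr]
end

section
/- Every simple graph that is not a disjoint union of complete graphs has an adjacency matrix eigenvalue strictly smaller than -1. -/
open Matrix Finset

theorem stmt_11 (n : ℕ) (G : SimpleGraph (Fin n)) [DecidableRel G.Adj]
    (hnotcliques : ¬ ∀ u v w : Fin n, G.Adj u v → G.Adj v w → u ≠ w → G.Adj u w) :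
    ∃ μ : ℝ, μ < -1 ∧ ∃ x ≠ 0, (G.adjMatrix ℝ) *ᵥ x = μ • x := by
  push_neg at hnotcliques
  obtain ⟨u, v, w, huv, hvw, huw, hnadj⟩ := hnotcliques
  have huv' : u ≠ v := G.ne_of_adj huv
  have hvw' : v ≠ w := G.ne_of_adj hvw
  set A := G.adjMatrix ℝ with hAdef
  have hA : A.IsHermitian := by
    ext i j
    simp [hAdef, Matrix.conjTranspose_apply, SimpleGraph.adjMatrix_apply, G.adj_comm i j]
  set x : Fin n → ℝ :=
    (Pi.single u 1 - Pi.single v 1 + Pi.single w 1 : Fin n → ℝ) with hx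
  -- entries of adjacency matrix
  have hAuv : A u v = 1 := by simp [hAdef, huv]
  have hAvu : A v u = 1 := by simp [hAdef, huv.symm]
  have hAvw : A v w = 1 := by simp [hAdef, hvw]
  have hAwv : A w v = 1 := by simp [hAdef, hvw.symm]
  have hAuw : A u w = 0 := by simp [hAdef, hnadj]
  have hnadj' : ¬ G.Adj w u := fun h => hnadj h.symm
  have hAwu : A w u = 0 := by simp [hAdef, hnadj']
  have hAuu : A u u = 0 := by simp [hAdef]
  have hAvv : A v v = 0 := by simp [hAdef]
  have hAww : A w w = 0 := by simp [hAdef]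
  -- dot product computations
  have hquad : dotProduct (x : Fin n → ℝ) (A *ᵥ (x : Fin n → ℝ)) = -4 := by
    simp only [hx, mulVec_add, mulVec_sub, mulVec_single, dotProduct_add, dotProduct_sub,
      add_dotProduct, sub_dotProduct, single_dotProduct, mul_one, one_mul,
      Pi.add_apply, Pi.sub_apply, MulOpposite.op_one, one_smul, Matrix.col_apply]
    rw [hAuv, hAvu, hAvw, hAwv, hAuw, hAwu, hAuu, hAvv, hAww]
    ring
  have hnormsq : dotProduct (x : Fin n → ℝ) (x : Fin n → ℝ) = 3 := by
    simp only [hx, dotProduct_add, dotProduct_sub, add_dotProduct, sub_dotProduct,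
      single_dotProduct, one_mul, Pi.add_apply, Pi.sub_apply]
    rw [Pi.single_eq_same, Pi.single_eq_same, Pi.single_eq_same,
      Pi.single_eq_of_ne huv'.symm, Pi.single_eq_of_ne huv', Pi.single_eq_of_ne huw.symm,
      Pi.single_eq_of_ne huw, Pi.single_eq_of_ne hvw'.symm, Pi.single_eq_of_ne hvw']
    ring
  have hxne : x ≠ 0 := by
    intro h
    have : x u = 0 := by rw [h]; rfl
    rw [hx] at this
    simp [Pi.single_eq_of_ne, huv'.symm, huw.symm, Pi.single_eq_of_ne huw.symm] at this
  -- spectral decomposition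
  set U : Matrix (Fin n) (Fin n) ℝ := (hA.eigenvectorUnitary : Matrix (Fin n) (Fin n) ℝ) with hU
  set μ := hA.eigenvalues with hμ
  set y : Fin n → ℝ := star U *ᵥ (x : Fin n → ℝ) with hy
  have hUU : U * star U = 1 := Matrix.mem_unitaryGroup_iff.mp (hA.eigenvectorUnitary).2
  have hstarU : star U = Uᵀ := by
    ext i j; simp [Matrix.star_apply]
  have hvm : (x : Fin n → ℝ) ᵥ* U = y := by
    rw [hy, hstarU, mulVec_transpose]
  have key1 : dotProduct (x : Fin n → ℝ) (A *ᵥ (x : Fin n → ℝ)) = ∑ i, μ i * (y i)^2 := by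
    conv_lhs => rw [hA.spectral_theorem, Unitary.conjStarAlgAut_apply]
    rw [← Matrix.mulVec_mulVec, ← Matrix.mulVec_mulVec, dotProduct_mulVec, hvm]
    rw [show ((star U : Matrix (Fin n) (Fin n) ℝ) *ᵥ (x : Fin n → ℝ)) = y from rfl]
    simp [dotProduct, Matrix.mulVec_diagonal]
    exact Finset.sum_congr rfl fun i _ => by ring
  have key2 : dotProduct (x : Fin n → ℝ) (x : Fin n → ℝ) = ∑ i, (y i)^2 := by
    have h0 : ∑ i, (y i)^2 = dotProduct y y := by
      simp [dotProduct, sq]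
    rw [h0]
    nth_rw 2 [hy]
    rw [dotProduct_mulVec, hstarU, vecMul_transpose, hy, Matrix.mulVec_mulVec, hstarU] at h0 ⊢
    rw [← hstarU, hUU, Matrix.one_mulVec]
  have hy3 : ∑ i, (y i)^2 = 3 := by rw [← key2]; exact hnormsq
  have hyμ : ∑ i, μ i * (y i)^2 = -4 := by rw [← key1, hquad]
  have hexists : ∃ i, μ i < -7/6 := by
    by_contra h
    push_neg at h
    have h1 : ∀ i ∈ Finset.univ, (-7/6 : ℝ) * (y i)^2 ≤ μ i * (y i)^2 :=
      fun i _ => mul_le_mul_of_nonneg_right (h i) (sq_nonneg _)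
    have h2 : (-7/6 : ℝ) * 3 ≤ ∑ i, μ i * (y i)^2 := by
      calc (-7/6 : ℝ) * 3 = ∑ i, (-7/6 : ℝ) * (y i)^2 := by rw [← Finset.mul_sum, hy3]
        _ ≤ _ := Finset.sum_le_sum h1
    rw [hyμ] at h2
    linarith
  obtain ⟨i, hi⟩ := hexists
  exact ⟨μ i, by linarith, ⇑(hA.eigenvectorBasis i),
    fun h => hA.eigenvectorBasis.orthonormal.ne_zero i (WithLp.ofLp_injective 2 (by simpa using h)), hA.mulVec_eigenvectorBasis i⟩
end

section
/- Let G be a vertex-transitive k-regular graph on an odd number n of vertices. Then every simple eigenvalue of the adjacency matrix of G equals k. -/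
open Matrix

theorem stmt_15 (n : ℕ) (hodd : Odd n) (G : SimpleGraph (Fin n)) [DecidableRel G.Adj]
    (htrans : ∀ u v : Fin n, ∃ e : G ≃g G, e u = v)
    (k : ℕ) (hreg : ∀ u, G.degree u = k)
    (A : Matrix (Fin n) (Fin n) ℝ) (hA : A = G.adjMatrix ℝ)
    (τ : ℝ)
    (heig : ∃ w ≠ 0, A *ᵥ w = τ • w)
    (hsimple : Module.finrank ℝ (Module.End.eigenspace (Matrix.mulVecLin A) τ) = 1) :
    τ = (k : ℝ) := by
  classical
  obtain ⟨w, hw0, hww⟩ := heig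
  set S := Module.End.eigenspace (Matrix.mulVecLin A) τ with hS
  have hmem : ∀ v : Fin n → ℝ, A *ᵥ v = τ • v → v ∈ S := by
    intro v hv
    rw [hS, Module.End.mem_eigenspace_iff]
    simpa [Matrix.mulVecLin_apply] using hv
  have hwS : w ∈ S := hmem w hww
  have hAsym : ∀ (e : G ≃g G) (u v : Fin n), A (e u) (e v) = A u v := by
    intro e u v
    simp [hA, SimpleGraph.adjMatrix_apply, e.map_adj_iff]
  have key : ∀ e : G ≃g G,
      A *ᵥ (fun u => w (e.symm u)) = τ • (fun u => w (e.symm u)) := by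
    intro e
    funext u
    have h1 : (A *ᵥ (fun u => w (e.symm u))) u = ∑ x, A u (e x) * w x := by
      rw [Matrix.mulVec]
      refine (Fintype.sum_equiv e.toEquiv _ _ ?_).symm
      intro x
      simp [dotProduct]
    have h2 : ∀ x, A u (e x) = A (e.symm u) x := by
      intro x
      have := hAsym e (e.symm u) x
      simpa using this
    have h3 : ∑ x, A (e.symm u) x * w x = (A *ᵥ w) (e.symm u) := rfl
    rw [h1]
    simp only [h2]
    rw [h3, hww]
    simp
  -- extract scalar for each automorphism
  have hrank := (finrank_eq_one_iff_of_nonzero' (⟨w, hwS⟩ : S)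
    (by simpa [Subtype.ext_iff] using hw0)).mp hsimple
  have hsumpos : (0:ℝ) < ∑ u, w u ^ 2 := by
    obtain ⟨u₀, hu₀⟩ := Function.ne_iff.mp hw0
    have hu₀' : w u₀ ≠ 0 := by simpa using hu₀
    refine Finset.sum_pos' (fun i _ => sq_nonneg _) ⟨u₀, Finset.mem_univ _, ?_⟩
    positivity
  have hc : ∀ e : G ≃g G, ∃ c : ℝ, (c = 1 ∨ c = -1) ∧ ∀ u, w (e.symm u) = c * w u := by
    intro e
    obtain ⟨c, hc⟩ := hrank ⟨fun u => w (e.symm u), hmem _ (key e)⟩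
    have hc' : ∀ u, w (e.symm u) = c * w u := by
      intro u
      have := congrArg (fun v : S => (v : Fin n → ℝ) u) hc
      simpa using this.symm
    refine ⟨c, ?_, hc'⟩
    have hsq : ∑ u, w (e.symm u) ^ 2 = ∑ u, w u ^ 2 :=
      Equiv.sum_comp e.symm.toEquiv (fun u => w u ^ 2)
    have : c ^ 2 * ∑ u, w u ^ 2 = ∑ u, w u ^ 2 := by
      calc c ^ 2 * ∑ u, w u ^ 2 = ∑ u, w (e.symm u) ^ 2 := by
            rw [Finset.mul_sum]
            exact Finset.sum_congr rfl fun u _ => by rw [hc' u]; ring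
        _ = ∑ u, w u ^ 2 := hsq
    have hc2 : c ^ 2 = 1 := by
      have := mul_right_cancel₀ (ne_of_gt hsumpos) (by rw [this, one_mul] :
        c ^ 2 * ∑ u, w u ^ 2 = 1 * ∑ u, w u ^ 2)
      exact this
    exact mul_self_eq_one_iff.mp (by rw [← sq]; exact hc2)
  -- squares of entries are all equal
  obtain ⟨u₀, hu₀⟩ := Function.ne_iff.mp hw0
  have hsq_eq : ∀ u v : Fin n, w u ^ 2 = w v ^ 2 := by
    intro u v
    obtain ⟨e, he⟩ := htrans u v
    obtain ⟨c, hc1, hce⟩ := hc e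
    have hsv : e.symm v = u := by rw [← he]; simp
    have : w u = c * w v := by
      have := hce v
      rw [hsv] at this
      exact this
    rcases hc1 with h | h <;> rw [this, h] <;> ring
  have hu₀' : w u₀ ≠ 0 := by simpa using hu₀
  have hne : ∀ u, w u ≠ 0 := by
    intro u hu
    apply hu₀'
    have := hsq_eq u₀ u
    rw [hu] at this
    simpa [pow_eq_zero_iff] using this
  -- all scalars are 1
  have hc1 : ∀ e : G ≃g G, ∀ u, w (e.symm u) = w u := by
    intro e u
    obtain ⟨c, hc1, hce⟩ := hc e
    rcases hc1 with h | h
    · rw [hce u, h, one_mul]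
    · exfalso
      -- n would be even
      set P := Finset.univ.filter (fun x => 0 < w x) with hP
      set N := Finset.univ.filter (fun x => w x < 0) with hN
      have himg : N = P.image (fun x => e.symm x) := by
        ext x
        simp only [hN, hP, Finset.mem_filter, Finset.mem_univ, true_and,
          Finset.mem_image]
        constructor
        · intro hx
          refine ⟨e x, ?_, by simp⟩
          have := hce (e x)
          rw [h] at this
          simp at this
          nlinarith [this]
        · rintro ⟨y, hy, rfl⟩
          have := hce y
          rw [h] at this
          nlinarith [this]
      have hcardPN : N.card = P.card := by
        rw [himg]
        exact Finset.card_image_of_injective _ (e.symm.toEquiv.injective)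
      have hsplit : P.card + N.card = n := by
        have := Finset.card_filter_add_card_filter_not
          (s := Finset.univ) (p := fun x : Fin n => 0 < w x)
        rw [Finset.card_univ, Fintype.card_fin] at this
        have hNeq : Finset.univ.filter (fun x : Fin n => ¬ 0 < w x) = N := by
          ext x
          simp only [hN, Finset.mem_filter, Finset.mem_univ, true_and, not_lt]
          constructor
          · intro hx
            exact lt_of_le_of_ne hx (hne x)
          · intro hx
            exact le_of_lt hx
        rw [hNeq] at this
        exact this
      have : Even n := by
        refine ⟨P.card, ?_⟩
        omega
      exact (Nat.not_even_iff_odd.mpr hodd) this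
  -- w is constant
  have hconst : ∀ u v : Fin n, w u = w v := by
    intro u v
    obtain ⟨e, he⟩ := htrans u v
    have hsv : e.symm v = u := by rw [← he]; simp
    have := hc1 e v
    rw [hsv] at this
    exact this
  -- conclude
  have heq : τ * w u₀ = (k : ℝ) * w u₀ := by
    have h1 : (A *ᵥ w) u₀ = τ * w u₀ := by rw [hww]; simp
    have h2 : (A *ᵥ w) u₀ = (k : ℝ) * w u₀ := by
      rw [hA, SimpleGraph.adjMatrix_mulVec_apply,
        Finset.sum_congr rfl (fun x _ => hconst x u₀), Finset.sum_const,
        SimpleGraph.card_neighborFinset_eq_degree, hreg u₀, nsmul_eq_mul]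
    rw [← h1, h2]
  exact mul_right_cancel₀ (hne u₀) heq
end

section
/- Let G be a graph with n vertices and e edges, B its n×e unoriented incidence matrix, and r the number of connected components of G that are bipartite. Then rank(B) = n - r over the reals. -/
open Matrix

namespace Stmt17

variable {n : ℕ} (G : SimpleGraph (Fin n))

/-- The component of `c` is bipartite. -/
def Bip (c : G.ConnectedComponent) : Prop :=
  (G.induce {v | G.connectedComponentMk v = c}).Colorable 2

open Classical in
/-- A sign function: `±1` on bipartite components (according to a chosen 2-coloring),
`0` elsewhere. -/
noncomputable def sgn (v : Fin n) : ℝ :=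
  if h : Bip G (G.connectedComponentMk v) then
    (-1 : ℝ) ^ (((Classical.choice h) ⟨v, rfl⟩ : Fin 2) : ℕ)
  else 0

lemma sgn_eq {c : G.ConnectedComponent} (hc : Bip G c) {w : Fin n}
    (hw : G.connectedComponentMk w = c) :
    sgn G w = (-1 : ℝ) ^ (((Classical.choice hc) ⟨w, hw⟩ : Fin 2) : ℕ) := by
  subst hw
  exact dif_pos hc

lemma sgn_of_not_bip {w : Fin n} (h : ¬ Bip G (G.connectedComponentMk w)) :
    sgn G w = 0 := dif_neg h

lemma sgn_ne_zero {w : Fin n} (h : Bip G (G.connectedComponentMk w)) :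
    sgn G w ≠ 0 := by
  rw [sgn_eq G h rfl]
  positivity

lemma sgn_mul_self {w : Fin n} (h : Bip G (G.connectedComponentMk w)) :
    sgn G w * sgn G w = 1 := by
  rw [sgn_eq G h rfl, ← pow_add]
  exact Even.neg_one_pow ⟨_, rfl⟩

lemma sgn_adj {u v : Fin n} (h : G.Adj u v)
    (hb : Bip G (G.connectedComponentMk u)) :
    sgn G u = - sgn G v := by
  have hcm : G.connectedComponentMk v = G.connectedComponentMk u :=
    (SimpleGraph.ConnectedComponent.connectedComponentMk_eq_of_adj (G := G) h).symm
  rw [sgn_eq G hb rfl, sgn_eq G hb hcm]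
  set C := Classical.choice hb
  have hne : C ⟨u, rfl⟩ ≠ C ⟨v, hcm⟩ := by
    apply C.valid
    simpa using h
  generalize C ⟨u, rfl⟩ = a at hne
  generalize C ⟨v, hcm⟩ = b at hne
  fin_cases a <;> fin_cases b <;> simp_all

variable {G}

section Ker

variable {x : Fin n → ℝ} (hx : ∀ u v, G.Adj u v → x u + x v = 0)

include hx

lemma walk_pm {u v : Fin n} (p : G.Walk u v) : x v = x u ∨ x v = - x u := by
  induction p with
  | nil => left; rfl
  | @cons a b c h q ih =>
    have hab := hx a b h
    rcases ih with h' | h'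
    · right; rw [h']; linarith
    · left; rw [h']; linarith

lemma walk_sgn {u v : Fin n} (p : G.Walk u v)
    (hb : Bip G (G.connectedComponentMk u)) :
    sgn G u * x u = sgn G v * x v := by
  induction p with
  | nil => rfl
  | @cons a b c h q ih =>
    have hcm : G.connectedComponentMk a = G.connectedComponentMk b :=
      SimpleGraph.ConnectedComponent.connectedComponentMk_eq_of_adj (G := G) h
    have hb' : Bip G (G.connectedComponentMk b) := hcm ▸ hb
    have h1 : sgn G a = - sgn G b := sgn_adj G h hb
    have h2 : x a + x b = 0 := hx a b h
    have h3 : x a = - x b := by linarith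
    have : sgn G a * x a = sgn G b * x b := by
      rw [h1, h3]; ring
    rw [this]
    exact ih hb'

lemma bip_of_ne_zero {v : Fin n} (hv : x v ≠ 0) :
    Bip G (G.connectedComponentMk v) := by
  refine ⟨SimpleGraph.Coloring.mk
    (fun w => if x w.1 = x v then 0 else 1) ?_⟩
  rintro ⟨a, ha⟩ ⟨b, hb⟩ hab
  have hadj : G.Adj a b := by simpa using hab
  have hra : G.Reachable v a := (SimpleGraph.ConnectedComponent.exact ha).symm
  have hrb : G.Reachable v b := (SimpleGraph.ConnectedComponent.exact hb).symm
  have hxa : x a = x v ∨ x a = - x v := walk_pm hx (Classical.choice hra)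
  have hxb : x b = x v ∨ x b = - x v := walk_pm hx (Classical.choice hrb)
  have hab' : x b = - x a := by have := hx a b hadj; linarith
  have hv' : - x v ≠ x v := by intro h; apply hv; linarith
  show (if x a = x v then (0 : Fin 2) else 1) ≠ (if x b = x v then 0 else 1)
  rcases hxa with h1 | h1
  · rw [if_pos h1, if_neg (by rw [hab', h1]; exact hv')]
    decide
  · rw [if_neg (by rw [h1]; exact hv'), if_pos (by rw [hab', h1]; ring)]
    decide

end Ker

end Stmt17

open Stmt17 in
theorem stmt_17 (n : ℕ) (G : SimpleGraph (Fin n)) [DecidableRel G.Adj]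
    (B : Matrix (Fin n) G.edgeSet ℝ)
    (hB : ∀ (i : Fin n) (e : G.edgeSet), B i e = if i ∈ (e : Sym2 (Fin n)) then 1 else 0)
    (r : ℕ)
    (hr : r = Nat.card {c : G.ConnectedComponent //
        (G.induce {v | G.connectedComponentMk v = c}).Colorable 2}) :
    B.rank = n - r := by
  classical
  subst hr
  set T := (Bᵀ).mulVecLin with hT
  have hsum : ∀ (x : Fin n → ℝ) (u v : Fin n), u ≠ v →
      ∑ i, (if i ∈ (s(u,v) : Sym2 (Fin n)) then (1:ℝ) else 0) * x i = x u + x v := by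
    intro x u v huv
    have h1 : ∀ i : Fin n, (if i ∈ (s(u,v) : Sym2 (Fin n)) then (1:ℝ) else 0) * x i
        = (if i = u then x i else 0) + (if i = v then x i else 0) := by
      intro i
      by_cases h1 : i = u <;> by_cases h2 : i = v <;>
        simp_all [Sym2.mem_iff]
    rw [Finset.sum_congr rfl fun i _ => h1 i, Finset.sum_add_distrib,
      Finset.sum_ite_eq' Finset.univ u x, Finset.sum_ite_eq' Finset.univ v x]
    simp
  have key : ∀ x : Fin n → ℝ, x ∈ LinearMap.ker T ↔
      ∀ u v, G.Adj u v → x u + x v = 0 := by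
    intro x
    rw [LinearMap.mem_ker]
    constructor
    · intro hker u v huv
      have h0 : ∑ i, B i ⟨s(u,v), (G.mem_edgeSet).2 huv⟩ * x i = 0 :=
        congrFun hker ⟨s(u,v), (G.mem_edgeSet).2 huv⟩
      simp only [hB] at h0
      rwa [hsum x u v huv.ne] at h0
    · intro hadj
      funext e
      obtain ⟨e, he⟩ := e
      induction e using Sym2.ind with
      | _ u v =>
        have huv : G.Adj u v := (G.mem_edgeSet).1 he
        show ∑ i, B i ⟨s(u,v), he⟩ * x i = 0
        simp only [hB]
        rw [hsum x u v huv.ne]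
        exact hadj u v huv
  haveI : Finite G.ConnectedComponent := Quot.finite _
  set S := {c : G.ConnectedComponent // Bip G c} with hS
  haveI : Fintype S := Fintype.ofFinite S
  let F : (S → ℝ) →ₗ[ℝ] (Fin n → ℝ) :=
    { toFun := fun a v =>
        if h : Bip G (G.connectedComponentMk v) then sgn G v * a ⟨_, h⟩ else 0
      map_add' := by
        intro a b; funext v
        by_cases h : Bip G (G.connectedComponentMk v) <;> simp [h] <;> ring
      map_smul' := by
        intro m a; funext v
        by_cases h : Bip G (G.connectedComponentMk v) <;> simp [h] <;> ring }
  have hFmem : ∀ a, F a ∈ LinearMap.ker T := by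
    intro a
    rw [key]
    intro u v huv
    have hcm : G.connectedComponentMk u = G.connectedComponentMk v :=
      SimpleGraph.ConnectedComponent.connectedComponentMk_eq_of_adj (G := G) huv
    simp only [F, LinearMap.coe_mk, AddHom.coe_mk]
    by_cases h : Bip G (G.connectedComponentMk u)
    · have h' : Bip G (G.connectedComponentMk v) := by rw [← hcm]; exact h
      rw [dif_pos h, dif_pos h']
      have hs : sgn G u = - sgn G v := sgn_adj G huv h
      have heq : (⟨G.connectedComponentMk u, h⟩ : S) =
          ⟨G.connectedComponentMk v, h'⟩ := Subtype.ext hcm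
      rw [hs, heq]; ring
    · have h' : ¬ Bip G (G.connectedComponentMk v) := by rw [← hcm]; exact h
      rw [dif_neg h, dif_neg h']; ring
  let F' := F.codRestrict (LinearMap.ker T) hFmem
  have hinj : Function.Injective F' := by
    intro a b hab
    have hab' : F a = F b := congrArg Subtype.val hab
    funext c
    obtain ⟨c, hc⟩ := c
    obtain ⟨v, hv0⟩ := c.exists_rep
    have hv : G.connectedComponentMk v = c := hv0
    have hb : Bip G (G.connectedComponentMk v) := by rw [hv]; exact hc
    have h1 := congrFun hab' v
    simp only [F, LinearMap.coe_mk, AddHom.coe_mk] at h1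
    rw [dif_pos hb, dif_pos hb] at h1
    have h2 := mul_left_cancel₀ (sgn_ne_zero G hb) h1
    have he : (⟨G.connectedComponentMk v, hb⟩ : S) = ⟨c, hc⟩ := Subtype.ext hv
    rwa [he] at h2
  have hsurj : Function.Surjective F' := by
    rintro ⟨x, hx⟩
    have hx' := (key x).1 hx
    refine ⟨fun c => sgn G c.1.exists_rep.choose * x c.1.exists_rep.choose, ?_⟩
    apply Subtype.ext
    show F _ = x
    funext v
    simp only [F, LinearMap.coe_mk, AddHom.coe_mk]
    by_cases h : Bip G (G.connectedComponentMk v)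
    · rw [dif_pos h]
      set w := (G.connectedComponentMk v).exists_rep.choose with hwdef
      have hw' : G.connectedComponentMk w = G.connectedComponentMk v :=
        (G.connectedComponentMk v).exists_rep.choose_spec
      have hbw : Bip G (G.connectedComponentMk w) := by rw [hw']; exact h
      have hwalk : G.Walk w v :=
        Classical.choice (SimpleGraph.ConnectedComponent.exact hw')
      have h3 := walk_sgn hx' hwalk hbw
      rw [h3, ← mul_assoc, sgn_mul_self G h, one_mul]
    · rw [dif_neg h]
      rcases eq_or_ne (x v) 0 with h0 | h0
      · exact h0.symm
      · exact absurd (bip_of_ne_zero hx' h0) h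
  have e1 : Module.finrank ℝ ↥(LinearMap.ker T) = Fintype.card S := by
    rw [← LinearEquiv.finrank_eq (LinearEquiv.ofBijective F' ⟨hinj, hsurj⟩),
      Module.finrank_fintype_fun_eq_card]
  have e2 : B.rank + Module.finrank ℝ ↥(LinearMap.ker T) = n := by
    rw [← Matrix.rank_transpose B, Matrix.rank]
    have h3 := LinearMap.finrank_range_add_finrank_ker T
    rwa [Module.finrank_fintype_fun_eq_card, Fintype.card_fin] at h3
  have e3 : Nat.card {c : G.ConnectedComponent //
      (G.induce {v | G.connectedComponentMk v = c}).Colorable 2} = Fintype.card S := by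
    rw [show {c : G.ConnectedComponent //
      (G.induce {v | G.connectedComponentMk v = c}).Colorable 2} = S from rfl]
    exact Nat.card_eq_fintype_card
  omega
end
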